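/- arXiv:1701.06555 — 7 statements merged into one kernel-verified Lean document; each statement's English description precedes it below -/
import Mathlib

section
/- Key equations (equality case): in the interleaved Reed–Solomon decoding setup, for any positive integers s ≤ ℓ and any multi-index j ∈ ℕ^m with 1 ≤ |j| < s, one has the polynomial identity Λ^s·f^j = Σ_{i ⪯ j} [Λ^{s-|i|}·Ω^i]·[C(j,i)·R^{j-i}·G^{|i|}], where the sum ranges over all i ∈ ℕ^m with i ⪯ j. -/
open Polynomial

/-- Theorem 1 (key equations, equality case) of the paper: in the interleaved
Reed–Solomon decoding setup, for positive integers `s ≤ ℓ` and any multi-index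
`j ∈ ℕ^m` with `1 ≤ |j| < s`, one has
`Λ^s·f^j = ∑_{i ⪯ j} [Λ^{s-|i|}·Ω^i]·[C(j,i)·R^{j-i}·G^{|i|}]`. -/
theorem key_equation_equality (F : Type*) [Field F] [Fintype F]
    (n k m : ℕ) (hk : k < n) (hm : 1 ≤ m)
    (α : Fin n → F) (hα : Function.Injective α)
    (f : Fin m → Polynomial F) (hf : ∀ t, (f t).degree < (k : ℕ))
    (e : Fin m → Fin n → F)
    (E : Finset (Fin n)) (hE : ∀ i, i ∈ E ↔ ∃ t, e t i ≠ 0)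
    (Λ : Polynomial F) (hΛ : Λ = ∏ i ∈ E, (X - C (α i)))
    (G : Polynomial F) (hG : G = ∏ i : Fin n, (X - C (α i)))
    (R : Fin m → Polynomial F) (hRdeg : ∀ t, (R t).degree < (n : ℕ))
    (hR : ∀ t i, (R t).eval (α i) = (f t).eval (α i) + e t i)
    (Ω : Fin m → Polynomial F) (hΩ : ∀ t, Ω t * G = Λ * (f t - R t))
    (s ℓ : ℕ) (hs : 0 < s) (hsℓ : s ≤ ℓ)
    (j : Fin m → ℕ) (hj1 : 1 ≤ ∑ t, j t) (hjs : ∑ t, j t < s) :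
    Λ ^ s * ∏ t, f t ^ j t =
      ∑ i ∈ Finset.Iic j,
        (Λ ^ (s - ∑ t, i t) * ∏ t, Ω t ^ i t) *
          (((∏ t, (j t).choose (i t) : ℕ) : Polynomial F) *
            (∏ t, R t ^ (j t - i t)) * G ^ (∑ t, i t)) := by
  classical
  have key : ∀ t, Λ * f t = Ω t * G + Λ * R t := by
    intro t; linear_combination -hΩ t
  have hpi : Fintype.piFinset (fun t => Finset.range (j t + 1)) = Finset.Iic j := by
    ext i
    simp [Fintype.mem_piFinset, Finset.mem_Iic, Nat.lt_succ_iff, Pi.le_def]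
  have step1 : Λ ^ s * ∏ t, f t ^ j t
      = Λ ^ (s - ∑ t, j t) * ∏ t, (Λ * f t) ^ j t := by
    simp only [mul_pow, Finset.prod_mul_distrib, Finset.prod_pow_eq_pow_sum]
    rw [← mul_assoc, ← pow_add, Nat.sub_add_cancel (le_of_lt hjs)]
  rw [step1]
  have step2 : ∀ t, (Λ * f t) ^ j t
      = ∑ i ∈ Finset.range (j t + 1),
          (Ω t * G) ^ i * (Λ * R t) ^ (j t - i) * ((j t).choose i : Polynomial F) := by
    intro t
    rw [key t, add_pow]
  simp only [step2]
  rw [Finset.prod_univ_sum, hpi, Finset.mul_sum]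
  refine Finset.sum_congr rfl fun i hi => ?_
  have hle : ∀ t, i t ≤ j t := fun t => Finset.mem_Iic.mp hi t
  have hsumle : ∑ t, i t ≤ ∑ t, j t := Finset.sum_le_sum fun t _ => hle t
  have hsub : ∑ t, (j t - i t) + ∑ t, i t = ∑ t, j t := by
    rw [← Finset.sum_add_distrib]
    exact Finset.sum_congr rfl fun t _ => by have := hle t; omega
  simp only [mul_pow, Finset.prod_mul_distrib, Finset.prod_pow_eq_pow_sum, Nat.cast_prod]
  have hexp : Λ ^ (s - ∑ t, j t) * Λ ^ (∑ t, (j t - i t)) = Λ ^ (s - ∑ t, i t) := by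
    rw [← pow_add]
    congr 1
    omega
  rw [← hexp]
  ring
end

section
/- Key equations (congruence case): in the interleaved Reed–Solomon decoding setup, for any positive integers s ≤ ℓ and any multi-index j ∈ ℕ^m with s ≤ |j| ≤ ℓ, one has the congruence Λ^s·f^j ≡ Σ_{i ⪯ j, |i| < s} [Λ^{s-|i|}·Ω^i]·[C(j,i)·R^{j-i}·G^{|i|}] (mod G^s), i.e., G^s divides the difference of the two sides. -/
open Polynomial

lemma prod_add_pow' {A : Type*} [CommRing A] {m : ℕ} (B C : Fin m → A) (j : Fin m → ℕ) :
    ∏ t, (C t + B t) ^ j t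
      = ∑ i ∈ Finset.Iic j, (∏ t, ((j t).choose (i t) : A)) * (∏ t, C t ^ i t)
          * ∏ t, B t ^ (j t - i t) := by
  have hset : Finset.Iic j = Fintype.piFinset (fun t => Finset.range (j t + 1)) := by
    ext i
    simp [Fintype.mem_piFinset, Pi.le_def, Nat.lt_succ_iff]
  simp_rw [add_pow]
  rw [Finset.prod_univ_sum, hset]
  refine Finset.sum_congr rfl fun i _ => ?_
  rw [Finset.prod_mul_distrib, Finset.prod_mul_distrib]
  ring

/-- Theorem 1 (key equations, congruence case) of the paper: in the interleaved
Reed–Solomon decoding setup, for positive integers `s ≤ ℓ` and any multi-index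
`j ∈ ℕ^m` with `s ≤ |j| ≤ ℓ`, one has
`Λ^s·f^j ≡ ∑_{i ⪯ j, |i| < s} [Λ^{s-|i|}·Ω^i]·[C(j,i)·R^{j-i}·G^{|i|}] (mod G^s)`. -/
theorem key_equation_congruence (F : Type*) [Field F] [Fintype F]
    (n k m : ℕ) (hk : k < n) (hm : 1 ≤ m)
    (α : Fin n → F) (hα : Function.Injective α)
    (f : Fin m → Polynomial F) (hf : ∀ t, (f t).degree < (k : ℕ))
    (e : Fin m → Fin n → F)
    (E : Finset (Fin n)) (hE : ∀ i, i ∈ E ↔ ∃ t, e t i ≠ 0)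
    (Λ : Polynomial F) (hΛ : Λ = ∏ i ∈ E, (X - C (α i)))
    (G : Polynomial F) (hG : G = ∏ i : Fin n, (X - C (α i)))
    (R : Fin m → Polynomial F) (hRdeg : ∀ t, (R t).degree < (n : ℕ))
    (hR : ∀ t i, (R t).eval (α i) = (f t).eval (α i) + e t i)
    (Ω : Fin m → Polynomial F) (hΩ : ∀ t, Ω t * G = Λ * (f t - R t))
    (s ℓ : ℕ) (hs : 0 < s) (hsℓ : s ≤ ℓ)
    (j : Fin m → ℕ) (hjs : s ≤ ∑ t, j t) (hjℓ : ∑ t, j t ≤ ℓ) :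
    G ^ s ∣
      (Λ ^ s * ∏ t, f t ^ j t -
        ∑ i ∈ (Finset.Iic j).filter (fun i => ∑ t, i t < s),
          (Λ ^ (s - ∑ t, i t) * ∏ t, Ω t ^ i t) *
            (((∏ t, (j t).choose (i t) : ℕ) : Polynomial F) *
              (∏ t, R t ^ (j t - i t)) * G ^ (∑ t, i t))) := by
  classical
  set N := ∑ t, j t with hN
  set Λ' : Polynomial F := ∏ i ∈ Eᶜ, (X - C (α i)) with hΛ'
  have hGsplit : G = Λ * Λ' := by
    rw [hG, hΛ, hΛ']
    exact (Finset.prod_mul_prod_compl E _).symm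
  have hcop : IsCoprime Λ Λ' := by
    rw [hΛ, hΛ']
    refine IsCoprime.prod_left fun a ha => IsCoprime.prod_right fun b hb => ?_
    exact Polynomial.pairwise_coprime_X_sub_C hα
      (fun h => (Finset.mem_compl.mp hb) (h ▸ ha))
  have hAf : ∀ t, Ω t * G + Λ * R t = Λ * f t := by
    intro t; rw [hΩ t]; ring
  -- the term appearing in the full expansion
  set term : (Fin m → ℕ) → Polynomial F := fun i =>
    ((∏ t, ((j t).choose (i t) : Polynomial F)) * (∏ t, Ω t ^ i t)
      * (∏ t, R t ^ (j t - i t)) * Λ ^ (N - ∑ t, i t)) * G ^ (∑ t, i t) with hterm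
  have key : Λ ^ N * ∏ t, f t ^ j t = ∑ i ∈ Finset.Iic j, term i := by
    have h1 : Λ ^ N * ∏ t, f t ^ j t = ∏ t, (Λ * f t) ^ j t := by
      simp_rw [mul_pow, Finset.prod_mul_distrib, Finset.prod_pow_eq_pow_sum]
      rfl
    have h2 : ∏ t, (Λ * f t) ^ j t = ∏ t, (Ω t * G + Λ * R t) ^ j t :=
      Finset.prod_congr rfl fun t _ => by rw [hAf t]
    rw [h1, h2, prod_add_pow' (fun t => Λ * R t) (fun t => Ω t * G) j]
    refine Finset.sum_congr rfl fun i hi => ?_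
    have hij : ∀ t, i t ≤ j t := fun t => (Finset.mem_Iic.mp hi) t
    have hC : ∏ t, (Ω t * G) ^ i t = (∏ t, Ω t ^ i t) * G ^ (∑ t, i t) := by
      simp_rw [mul_pow, Finset.prod_mul_distrib, Finset.prod_pow_eq_pow_sum]
    have hB : ∏ t, (Λ * R t) ^ (j t - i t)
        = Λ ^ (N - ∑ t, i t) * ∏ t, R t ^ (j t - i t) := by
      simp_rw [mul_pow, Finset.prod_mul_distrib, Finset.prod_pow_eq_pow_sum]
      congr 2
      rw [hN, ← Finset.sum_tsub_distrib _ (fun t _ => hij t)]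
    rw [hC, hB, hterm]
    ring
  set S : Polynomial F :=
    ∑ i ∈ (Finset.Iic j).filter (fun i => ∑ t, i t < s),
      (Λ ^ (s - ∑ t, i t) * ∏ t, Ω t ^ i t) *
        (((∏ t, (j t).choose (i t) : ℕ) : Polynomial F) *
          (∏ t, R t ^ (j t - i t)) * G ^ (∑ t, i t)) with hS
  set T : Polynomial F := Λ ^ s * ∏ t, f t ^ j t - S with hT
  have hsum : Λ ^ (N - s) * S = ∑ i ∈ (Finset.Iic j).filter (fun i => ∑ t, i t < s),
      term i := by
    rw [hS, Finset.mul_sum]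
    refine Finset.sum_congr rfl fun i hi => ?_
    obtain ⟨hij, hilt⟩ := Finset.mem_filter.mp hi
    have hpw : Λ ^ (N - ∑ t, i t) = Λ ^ (N - s) * Λ ^ (s - ∑ t, i t) := by
      rw [← pow_add]; congr 1; omega
    show _ = term i
    rw [hterm]
    beta_reduce
    rw [hpw]
    push_cast
    ring
  have hdiff : Λ ^ (N - s) * T
      = ∑ i ∈ (Finset.Iic j).filter (fun i => ¬ ∑ t, i t < s), term i := by
    rw [hT, mul_sub, ← mul_assoc, ← pow_add, Nat.sub_add_cancel hjs, key, hsum,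
      ← Finset.sum_filter_add_sum_filter_not (Finset.Iic j) (fun i => ∑ t, i t < s) term]
    exact add_sub_cancel_left _ _
  have hGdvd : G ^ s ∣ Λ ^ (N - s) * T := by
    rw [hdiff]
    refine Finset.dvd_sum fun i hi => ?_
    obtain ⟨hij, hge⟩ := Finset.mem_filter.mp hi
    exact Dvd.dvd.mul_left (pow_dvd_pow G (by omega)) _
  have hΛ'dvd : Λ' ^ s ∣ T := by
    refine (IsCoprime.pow (hcop.symm)).dvd_of_dvd_mul_left (dvd_trans ?_ hGdvd)
    rw [hGsplit, mul_pow]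
    exact dvd_mul_left _ _
  have hΛdvd : Λ ^ s ∣ T := by
    rw [hT]
    refine dvd_sub (Dvd.dvd.mul_right dvd_rfl _) (Finset.dvd_sum fun i hi => ?_)
    obtain ⟨hij, hlt⟩ := Finset.mem_filter.mp hi
    have h1 : Λ ^ s = Λ ^ (s - ∑ t, i t) * Λ ^ (∑ t, i t) := by
      rw [← pow_add]; congr 1; omega
    rw [h1]
    refine mul_dvd_mul (dvd_mul_right _ _) (Dvd.dvd.mul_left ?_ _)
    exact pow_dvd_pow_of_dvd ⟨Λ', hGsplit⟩ _
  have hGs : G ^ s = Λ ^ s * Λ' ^ s := by rw [hGsplit, mul_pow]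
  rw [hGs]
  exact (hcop.pow).mul_dvd hΛdvd hΛ'dvd
end

section
/- In the interleaved Reed–Solomon decoding setup, fix positive integers s ≤ ℓ and an integer τ ≥ deg Λ. Define Λ_i := Λ^{s-|i|}·Ω^i for i ∈ ℕ^m with |i| < s, Ψ_j := Λ^s·f^j for j ∈ ℕ^m with 1 ≤ |j| ≤ ℓ, and A_{i,j} := C(j,i)·R^{j-i}·G^{|i|}. Then: (1) deg Λ_i < τs - |i| + 1 for all |i| < s; (2) deg Ψ_j < τs + |j|(k-1) + 1 for all 1 ≤ |j| ≤ ℓ; and (3) for every j with 1 ≤ |j| ≤ ℓ, Σ_{i ⪯ j, |i| < s} Λ_i·A_{i,j} ≡ Ψ_j (mod G_j), where G_j := x^{τs + |j|(n-1) + 1} if |j| < s and G_j := G^s if |j| ≥ s. -/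
open Polynomial

private lemma range_succ_eq_Iic' (n : ℕ) : Finset.range (n + 1) = Finset.Iic n := by
  ext x; simp [Nat.lt_succ_iff]

private lemma Iic_pi_eq {m : ℕ} (j : Fin m → ℕ) :
    Finset.Iic j = Fintype.piFinset fun t => Finset.Iic (j t) := by
  ext i; simp [Fintype.mem_piFinset, Pi.le_def]

private lemma multi_binomial {P : Type*} [CommRing P] {m : ℕ} (a b : Fin m → P) (j : Fin m → ℕ) :
    ∏ t, (a t + b t) ^ j t =
      ∑ i ∈ Finset.Iic j, ((∏ t, (j t).choose (i t) : ℕ) : P) *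
        ((∏ t, a t ^ i t) * ∏ t, b t ^ (j t - i t)) := by
  have h1 : ∀ t : Fin m, (a t + b t) ^ j t =
      ∑ i ∈ Finset.Iic (j t), a t ^ i * b t ^ (j t - i) * ((j t).choose i : P) := by
    intro t
    rw [add_pow, range_succ_eq_Iic']
  calc ∏ t, (a t + b t) ^ j t
      = ∏ t, ∑ i ∈ Finset.Iic (j t), a t ^ i * b t ^ (j t - i) * ((j t).choose i : P) :=
        Finset.prod_congr rfl fun t _ => h1 t
    _ = ∑ p ∈ Fintype.piFinset (fun t => Finset.Iic (j t)),
          ∏ t, a t ^ p t * b t ^ (j t - p t) * ((j t).choose (p t) : P) :=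
        Finset.prod_univ_sum _ _
    _ = _ := by
        rw [← Iic_pi_eq]
        refine Finset.sum_congr rfl fun i _ => ?_
        rw [Finset.prod_mul_distrib, Finset.prod_mul_distrib, Nat.cast_prod]
        ring

/-- Proposition 1 of the paper: in the interleaved Reed–Solomon decoding setup with
parameters `s ≤ ℓ` and `τ ≥ deg Λ`, the tuple `Λ_i := Λ^{s-|i|}·Ω^i`,
`Ψ_j := Λ^s·f^j` is a solution of the simultaneous Hermite–Padé approximation with
inputs `A_{i,j} := C(j,i)·R^{j-i}·G^{|i|}`: the degree bounds
`deg Λ_i < τs - |i| + 1` and `deg Ψ_j < τs + |j|(k-1) + 1` hold, and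
`∑_{i ⪯ j, |i| < s} Λ_i·A_{i,j} ≡ Ψ_j (mod G_j)`, where `G_j = x^{τs+|j|(n-1)+1}` if
`|j| < s` and `G_j = G^s` otherwise. -/
theorem pade_solution_of_key_equations (F : Type*) [Field F] [Fintype F]
    (n k m : ℕ) (hk : k < n) (hm : 1 ≤ m)
    (α : Fin n → F) (hα : Function.Injective α)
    (f : Fin m → Polynomial F) (hf : ∀ t, (f t).degree < (k : ℕ))
    (e : Fin m → Fin n → F)
    (E : Finset (Fin n)) (hE : ∀ i, i ∈ E ↔ ∃ t, e t i ≠ 0)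
    (Λ : Polynomial F) (hΛ : Λ = ∏ i ∈ E, (X - C (α i)))
    (G : Polynomial F) (hG : G = ∏ i : Fin n, (X - C (α i)))
    (R : Fin m → Polynomial F) (hRdeg : ∀ t, (R t).degree < (n : ℕ))
    (hR : ∀ t i, (R t).eval (α i) = (f t).eval (α i) + e t i)
    (Ω : Fin m → Polynomial F) (hΩ : ∀ t, Ω t * G = Λ * (f t - R t))
    (s ℓ τ : ℕ) (hs : 0 < s) (hsℓ : s ≤ ℓ) (hτ : Λ.natDegree ≤ τ) :
    (∀ i : Fin m → ℕ, ∑ t, i t < s →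
      Λ ^ (s - ∑ t, i t) * ∏ t, Ω t ^ i t ≠ 0 →
      ((Λ ^ (s - ∑ t, i t) * ∏ t, Ω t ^ i t).natDegree : ℤ) <
        (τ : ℤ) * s - (∑ t, i t) + 1) ∧
    (∀ j : Fin m → ℕ, 1 ≤ ∑ t, j t → ∑ t, j t ≤ ℓ →
      Λ ^ s * ∏ t, f t ^ j t ≠ 0 →
      ((Λ ^ s * ∏ t, f t ^ j t).natDegree : ℤ) <
        (τ : ℤ) * s + (∑ t, j t) * ((k : ℤ) - 1) + 1) ∧
    (∀ j : Fin m → ℕ, 1 ≤ ∑ t, j t → ∑ t, j t ≤ ℓ →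
      (if (∑ t, j t) < s then (X : Polynomial F) ^ (τ * s + (∑ t, j t) * (n - 1) + 1)
        else G ^ s) ∣
        (∑ i ∈ (Finset.Iic j).filter (fun i => ∑ t, i t < s),
          (Λ ^ (s - ∑ t, i t) * ∏ t, Ω t ^ i t) *
            (((∏ t, (j t).choose (i t) : ℕ) : Polynomial F) *
              (∏ t, R t ^ (j t - i t)) * G ^ (∑ t, i t)) -
          Λ ^ s * ∏ t, f t ^ j t)) := by
  have hΛm : Λ.Monic := hΛ ▸ monic_prod_of_monic _ _ fun i _ => monic_X_sub_C _
  have hGm : G.Monic := hG ▸ monic_prod_of_monic _ _ fun i _ => monic_X_sub_C _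
  have hΛ0 : Λ ≠ 0 := hΛm.ne_zero
  have hG0 : G ≠ 0 := hGm.ne_zero
  have hn : 0 < n := lt_of_le_of_lt (Nat.zero_le k) hk
  have hGdeg : G.natDegree = n := by
    rw [hG, natDegree_prod _ _ fun i _ => X_sub_C_ne_zero _]
    simp
  have hfR : ∀ t, (f t - R t).degree < (n : ℕ) := by
    intro t
    refine lt_of_le_of_lt (degree_sub_le _ _) (max_lt (lt_trans (hf t) ?_) (hRdeg t))
    exact_mod_cast hk
  have hΩdeg : ∀ t, Ω t ≠ 0 → (Ω t).natDegree + 1 ≤ τ := by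
    intro t h0
    have hsub0 : f t - R t ≠ 0 := by
      intro hz
      apply h0
      have h := hΩ t
      rw [hz, mul_zero] at h
      exact (mul_eq_zero.mp h).resolve_right hG0
    have hd : (Ω t).natDegree + n = Λ.natDegree + (f t - R t).natDegree := by
      have h := congrArg natDegree (hΩ t)
      rwa [natDegree_mul h0 hG0, natDegree_mul hΛ0 hsub0, hGdeg] at h
    have h2 : (f t - R t).natDegree < n := (natDegree_lt_iff_degree_lt hsub0).mpr (hfR t)
    omega
  refine ⟨?_, ?_, ?_⟩
  · -- Part 1
    intro i hi hne
    have hprodne : (∏ t, Ω t ^ i t) ≠ 0 := fun h => hne (by rw [h, mul_zero])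
    have hΩine : ∀ t, Ω t ^ i t ≠ 0 := fun t =>
      Finset.prod_ne_zero_iff.mp hprodne t (Finset.mem_univ t)
    have hper : ∀ t, (Ω t ^ i t).natDegree + i t ≤ i t * τ := by
      intro t
      rcases Nat.eq_zero_or_pos (i t) with h | h
      · simp [h]
      · have h0 : Ω t ≠ 0 := fun hz => hΩine t (by rw [hz, zero_pow h.ne'])
        have := hΩdeg t h0
        rw [natDegree_pow]
        calc i t * (Ω t).natDegree + i t = i t * ((Ω t).natDegree + 1) := by ring
          _ ≤ i t * τ := Nat.mul_le_mul_left _ this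
    have h1 : (∏ t, Ω t ^ i t).natDegree ≤ ∑ t, (Ω t ^ i t).natDegree :=
      natDegree_prod_le _ _
    have h2 : ∑ t, ((Ω t ^ i t).natDegree + i t) ≤ ∑ t, i t * τ :=
      Finset.sum_le_sum fun t _ => hper t
    rw [Finset.sum_add_distrib, ← Finset.sum_mul] at h2
    have h3 : (Λ ^ (s - ∑ t, i t)).natDegree ≤ (s - ∑ t, i t) * τ := by
      rw [natDegree_pow]; exact Nat.mul_le_mul_left _ hτ
    have h4 := natDegree_mul_le (p := Λ ^ (s - ∑ t, i t)) (q := ∏ t, Ω t ^ i t)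
    have key : (Λ ^ (s - ∑ t, i t) * ∏ t, Ω t ^ i t).natDegree + (∑ t, i t) ≤ τ * s := by
      calc (Λ ^ (s - ∑ t, i t) * ∏ t, Ω t ^ i t).natDegree + (∑ t, i t)
          ≤ ((s - ∑ t, i t) * τ + ∑ t, (Ω t ^ i t).natDegree) + (∑ t, i t) :=
            Nat.add_le_add_right (le_trans h4 (Nat.add_le_add h3 h1)) _
        _ = (s - ∑ t, i t) * τ + (∑ t, (Ω t ^ i t).natDegree + ∑ t, i t) := by ring
        _ ≤ (s - ∑ t, i t) * τ + (∑ t, i t) * τ := Nat.add_le_add_left h2 _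
        _ = s * τ := by rw [← Nat.add_mul, Nat.sub_add_cancel hi.le]
        _ = τ * s := Nat.mul_comm _ _
    have key' : ((Λ ^ (s - ∑ t, i t) * ∏ t, Ω t ^ i t).natDegree : ℤ) + (∑ t, i t : ℕ) ≤
        (τ : ℤ) * s := by exact_mod_cast key
    push_cast at key' ⊢
    linarith
  · -- Part 2
    intro j hj1 hj2 hne
    have hprodne : (∏ t, f t ^ j t) ≠ 0 := fun h => hne (by rw [h, mul_zero])
    have hfne : ∀ t, f t ^ j t ≠ 0 := fun t =>
      Finset.prod_ne_zero_iff.mp hprodne t (Finset.mem_univ t)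
    have hper : ∀ t, ((f t ^ j t).natDegree : ℤ) ≤ (j t : ℤ) * ((k : ℤ) - 1) := by
      intro t
      rcases Nat.eq_zero_or_pos (j t) with h | h
      · simp [h]
      · have h0 : f t ≠ 0 := fun hz => hfne t (by rw [hz, zero_pow h.ne'])
        have hdk : (f t).natDegree < k := (natDegree_lt_iff_degree_lt h0).mpr (hf t)
        rw [natDegree_pow]
        have h1 : ((f t).natDegree : ℤ) ≤ (k : ℤ) - 1 := by omega
        calc ((j t * (f t).natDegree : ℕ) : ℤ) = (j t : ℤ) * ((f t).natDegree : ℤ) := by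
              push_cast; ring
          _ ≤ (j t : ℤ) * ((k : ℤ) - 1) := by
              exact mul_le_mul_of_nonneg_left h1 (by positivity)
    have h1 : ((∏ t, f t ^ j t).natDegree : ℤ) ≤ (∑ t, (j t : ℤ)) * ((k : ℤ) - 1) := by
      calc ((∏ t, f t ^ j t).natDegree : ℤ) ≤ ∑ t, ((f t ^ j t).natDegree : ℤ) := by
            exact_mod_cast natDegree_prod_le (Finset.univ) (fun t => f t ^ j t)
        _ ≤ ∑ t, (j t : ℤ) * ((k : ℤ) - 1) := Finset.sum_le_sum fun t _ => hper t
        _ = (∑ t, (j t : ℤ)) * ((k : ℤ) - 1) := (Finset.sum_mul _ _ _).symm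
    have h2 : ((Λ ^ s).natDegree : ℤ) ≤ (τ : ℤ) * s := by
      rw [natDegree_pow]
      have := Nat.mul_le_mul_left s hτ
      push_cast
      nlinarith [this]
    have h3 : ((Λ ^ s * ∏ t, f t ^ j t).natDegree : ℤ) ≤
        ((Λ ^ s).natDegree : ℤ) + ((∏ t, f t ^ j t).natDegree : ℤ) := by
      exact_mod_cast natDegree_mul_le (p := Λ ^ s) (q := ∏ t, f t ^ j t)
    push_cast
    linarith
  · -- Part 3
    intro j hj1 hj2
    set M : Polynomial F := ∏ i ∈ Eᶜ, (X - C (α i)) with hMdef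
    have hGLM : G = Λ * M := by
      rw [hG, hΛ, hMdef, Finset.prod_mul_prod_compl]
    have hfRM : ∀ t, f t = Ω t * M + R t := by
      intro t
      have h := hΩ t
      rw [hGLM] at h
      have h1 : Λ * (Ω t * M) = Λ * (f t - R t) := by linear_combination h
      have h2 := mul_left_cancel₀ hΛ0 h1
      linear_combination -h2
    have key : Λ ^ s * ∏ t, f t ^ j t =
        ∑ i ∈ Finset.Iic j, ((∏ t, (j t).choose (i t) : ℕ) : Polynomial F) *
          (Λ ^ s * ((∏ t, Ω t ^ i t) * M ^ (∑ t, i t) * ∏ t, R t ^ (j t - i t))) := by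
      have hprod : ∏ t, f t ^ j t = ∏ t, (Ω t * M + R t) ^ j t :=
        Finset.prod_congr rfl fun t _ => by rw [hfRM t]
      rw [hprod, multi_binomial, Finset.mul_sum]
      refine Finset.sum_congr rfl fun i _ => ?_
      simp_rw [mul_pow]
      rw [Finset.prod_mul_distrib, Finset.prod_pow_eq_pow_sum]
      ring
    rw [key, ← Finset.sum_filter_add_sum_filter_not (Finset.Iic j) (fun i => ∑ t, i t < s)]
    have hSeq : ∑ i ∈ (Finset.Iic j).filter (fun i => ∑ t, i t < s),
        ((∏ t, (j t).choose (i t) : ℕ) : Polynomial F) *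
          (Λ ^ s * ((∏ t, Ω t ^ i t) * M ^ (∑ t, i t) * ∏ t, R t ^ (j t - i t))) =
        ∑ i ∈ (Finset.Iic j).filter (fun i => ∑ t, i t < s),
          (Λ ^ (s - ∑ t, i t) * ∏ t, Ω t ^ i t) *
            (((∏ t, (j t).choose (i t) : ℕ) : Polynomial F) *
              (∏ t, R t ^ (j t - i t)) * G ^ (∑ t, i t)) := by
      refine Finset.sum_congr rfl fun i hi => ?_
      have his : ∑ t, i t < s := (Finset.mem_filter.mp hi).2
      have hΛs : Λ ^ s = Λ ^ (s - ∑ t, i t) * Λ ^ (∑ t, i t) := by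
        rw [← pow_add, Nat.sub_add_cancel his.le]
      rw [hΛs, hGLM, mul_pow]
      ring
    rw [hSeq]
    have hsub : ∀ a b : Polynomial F, a - (a + b) = -b := fun a b => by ring
    rcases lt_or_ge (∑ t, j t) s with hcase | hcase
    · rw [if_pos hcase]
      have hempty : (Finset.Iic j).filter (fun i => ¬ ∑ t, i t < s) = ∅ := by
        refine Finset.filter_false_of_mem fun i hi => ?_
        simp only [not_not]
        have hij : i ≤ j := Finset.mem_Iic.mp hi
        have : ∑ t, i t ≤ ∑ t, j t := Finset.sum_le_sum fun t _ => hij t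
        omega
      rw [hempty, Finset.sum_empty, hsub]
      simpa using dvd_zero _
    · rw [if_neg (not_lt.mpr hcase)]
      rw [hsub]
      refine dvd_neg.mpr (Finset.dvd_sum fun i hi => ?_)
      have hsi : s ≤ ∑ t, i t := not_lt.mp (Finset.mem_filter.mp hi).2
      refine ⟨((∏ t, (j t).choose (i t) : ℕ) : Polynomial F) *
        ((∏ t, Ω t ^ i t) * M ^ ((∑ t, i t) - s) * ∏ t, R t ^ (j t - i t)), ?_⟩
      have hM : M ^ (∑ t, i t) = M ^ s * M ^ ((∑ t, i t) - s) := by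
        rw [← pow_add, Nat.add_sub_cancel' hsi]
      rw [hGLM, mul_pow, hM]
      ring
end

section
/- Existence of solutions to simultaneous Hermite–Padé approximations: let F be a finite field, I and J finite index sets, S_{i,j} ∈ F[x] and G_j ∈ F[x] with G_j ≠ 0 for all i ∈ I, j ∈ J, and degree bounds N_i, T_j ∈ ℕ with T_j ≤ deg G_j for all j. If Σ_{i∈I} N_i > 1 + Σ_{j∈J} (deg G_j - T_j), then the set of solutions—tuples ((λ_i)_{i∈I}, (ψ_j)_{j∈J}) of polynomials with Σ_{i∈I} λ_i·S_{i,j} ≡ ψ_j (mod G_j) for all j ∈ J, deg λ_i < N_i for all i ∈ I, and deg ψ_j < T_j for all j ∈ J—is an F-vector space of dimension at least 2; in particular there exist two F-linearly independent nonzero solutions. -/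
open Polynomial

/-- Lemma 4 of the paper: a simultaneous Hermite–Padé approximation problem with
`∑_i N_i > 1 + ∑_j (deg G_j - T_j)` has (at least) two `F`-linearly independent
nonzero solutions. -/
theorem hermite_pade_two_independent_solutions (F : Type*) [Field F] [Fintype F]
    (I J : Type*) [Fintype I] [Fintype J]
    (S : I → J → Polynomial F) (G : J → Polynomial F) (hG : ∀ j, G j ≠ 0)
    (N : I → ℕ) (T : J → ℕ) (hT : ∀ j, T j ≤ (G j).natDegree)
    (hdim : ∑ i, N i > 1 + ∑ j, ((G j).natDegree - T j)) :
    ∃ (lam₁ : I → Polynomial F) (psi₁ : J → Polynomial F)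
      (lam₂ : I → Polynomial F) (psi₂ : J → Polynomial F),
      (∀ j, G j ∣ (∑ i, lam₁ i * S i j - psi₁ j)) ∧
      (∀ i, (lam₁ i).degree < (N i : ℕ)) ∧
      (∀ j, (psi₁ j).degree < (T j : ℕ)) ∧
      (∀ j, G j ∣ (∑ i, lam₂ i * S i j - psi₂ j)) ∧
      (∀ i, (lam₂ i).degree < (N i : ℕ)) ∧
      (∀ j, (psi₂ j).degree < (T j : ℕ)) ∧
      LinearIndependent F ![(lam₁, psi₁), (lam₂, psi₂)] := by
  classical
  -- monicize the moduli
  set M : J → Polynomial F := fun j => G j * C (G j).leadingCoeff⁻¹ with hM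
  have hMmonic : ∀ j, (M j).Monic := fun j => monic_mul_leadingCoeff_inv (hG j)
  have hMdeg : ∀ j, (M j).degree = (G j).degree := fun j =>
    degree_mul_leadingCoeff_inv (G j) (hG j)
  have hMnatDeg : ∀ j, (M j).natDegree = (G j).natDegree := by
    intro j
    rw [natDegree, natDegree, hMdeg]
  have hGM : ∀ j (p : Polynomial F), M j ∣ p → G j ∣ p := by
    rintro j p ⟨q, hq⟩
    exact ⟨C (G j).leadingCoeff⁻¹ * q, by rw [hq, hM]; ring⟩
  -- the linear map whose kernel is the solution space
  let Φ : (∀ i, degreeLT F (N i)) →ₗ[F] (∀ j, Fin ((G j).natDegree - T j) → F) :=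
    { toFun := fun l j k => ((∑ i, (l i : Polynomial F) * S i j) %ₘ M j).coeff (T j + k)
      map_add' := by
        intro a b
        funext j k
        simp [add_mul, Finset.sum_add_distrib, add_modByMonic]
      map_smul' := by
        intro c a
        funext j k
        simp [smul_mul_assoc, ← Finset.smul_sum, smul_modByMonic] }
  have instFin : ∀ i, Module.Finite F (degreeLT F (N i)) := fun i =>
    Module.Finite.equiv (degreeLTEquiv F (N i)).symm
  have hV : Module.finrank F (∀ i, degreeLT F (N i)) = ∑ i, N i := by
    rw [Module.finrank_pi_fintype]
    exact Finset.sum_congr rfl fun i _ => by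
      rw [(degreeLTEquiv F (N i)).finrank_eq, Module.finrank_fin_fun]
  have hW : Module.finrank F (∀ j, Fin ((G j).natDegree - T j) → F)
      = ∑ j, ((G j).natDegree - T j) := by
    rw [Module.finrank_pi_fintype]
    exact Finset.sum_congr rfl fun j _ => Module.finrank_fin_fun F
  have hker : 2 ≤ Module.finrank F (LinearMap.ker Φ) := by
    have h1 := LinearMap.finrank_range_add_finrank_ker Φ
    have h2 : Module.finrank F (LinearMap.range Φ) ≤ ∑ j, ((G j).natDegree - T j) := by
      rw [← hW]; exact Submodule.finrank_le _
    omega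
  obtain ⟨v, hv⟩ := exists_linearIndependent_of_le_finrank hker
  -- the two solutions
  set lam : Fin 2 → I → Polynomial F := fun k i => ((v k : ∀ i, degreeLT F (N i)) i : Polynomial F)
    with hlamdef
  set psi : Fin 2 → J → Polynomial F := fun k j => (∑ i, lam k i * S i j) %ₘ M j with hpsidef
  have hdvd : ∀ k j, G j ∣ (∑ i, lam k i * S i j - psi k j) := by
    intro k j
    refine hGM j _ ⟨(∑ i, lam k i * S i j) /ₘ M j, ?_⟩
    rw [hpsidef]
    simp only
    rw [modByMonic_eq_sub_mul_div _ _]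
    ring
  have hdegl : ∀ k i, (lam k i).degree < (N i : ℕ) :=
    fun k i => mem_degreeLT.mp ((v k : ∀ i, degreeLT F (N i)) i).2
  have hdegp : ∀ k j, (psi k j).degree < (T j : ℕ) := by
    intro k j
    rw [degree_lt_iff_coeff_zero]
    intro m hm
    by_cases hcase : m < (G j).natDegree
    · have hker0 : Φ (v k) = 0 := LinearMap.mem_ker.mp (v k).2
      have := congrFun (congrFun hker0 j) ⟨m - T j, by omega⟩
      simp only [Φ, LinearMap.coe_mk, AddHom.coe_mk, Pi.zero_apply] at this
      have harith : T j + (m - T j) = m := by omega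
      rw [harith] at this
      exact this
    · push_neg at hcase
      apply coeff_eq_zero_of_degree_lt
      calc (psi k j).degree < (M j).degree := degree_modByMonic_lt _ (hMmonic j)
        _ ≤ ((G j).natDegree : WithBot ℕ) := by rw [hMdeg j]; exact degree_le_natDegree
        _ ≤ (m : WithBot ℕ) := Nat.cast_le.mpr hcase
  -- linear independence
  have hlam : LinearIndependent F lam := by
    let e : (LinearMap.ker Φ) →ₗ[F] (I → Polynomial F) :=
      (LinearMap.pi fun i => (degreeLT F (N i)).subtype.comp (LinearMap.proj i)).comp
        (LinearMap.ker Φ).subtype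
    have he : Function.Injective e := by
      intro a b h
      apply Subtype.ext
      funext i
      apply Subtype.ext
      exact congrFun h i
    have := (LinearMap.linearIndependent_iff_of_injOn (e : (LinearMap.ker Φ) →ₗ[F] (I → Polynomial F)) he.injOn).mpr hv
    exact this
  have hpair : LinearIndependent F (fun k => (lam k, psi k) :
      Fin 2 → (I → Polynomial F) × (J → Polynomial F)) := by
    apply LinearIndependent.of_comp (LinearMap.fst F (I → Polynomial F) (J → Polynomial F))
    exact hlam
  refine ⟨lam 0, psi 0, lam 1, psi 1, hdvd 0, hdegl 0, hdegp 0, hdvd 1, hdegl 1, hdegp 1, ?_⟩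
  have heq : ![(lam 0, psi 0), (lam 1, psi 1)]
      = (fun k => (lam k, psi k) : Fin 2 → (I → Polynomial F) × (J → Polynomial F)) := by
    funext k
    fin_cases k <;> rfl
  rw [heq]
  exact hpair
end

section
/- Asymptotic decoding radius: fix integers n > k ≥ 2 and m ≥ 1, let γ := ((k-1)/n)^{1/(m+1)}, and for each positive integer i set ℓ_i := i and s_i := round(γ·i) + 1 (round to nearest integer). Define τ_new(ℓ,s) := n·[1 - (s·C(m+s-1,m) - m·C(m+s-1,m+1))/(s·C(m+ℓ,m))] - (m/(m+1))·(ℓ/s)·(k-1) - (1/s)·[1 - 1/C(m+ℓ,m)]. Then there exists a constant C > 0 (depending only on k/n and m) such that for all positive integers i, |τ_new(ℓ_i, s_i)/n - (1 - ((k-1)/n)^{m/(m+1)})| ≤ C/i. -/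
open Finset

lemma ascProd (n : ℕ) : ∀ k : ℕ, n.ascFactorial k = ∏ j ∈ Finset.range k, (n + j)
  | 0 => by simp
  | (k+1) => by rw [Nat.ascFactorial_succ, Finset.prod_range_succ, ascProd n k]; ring

lemma chooseFact (a b : ℕ) :
    ((a + b).choose b : ℝ) * (Nat.factorial b : ℝ) = ∏ j ∈ Finset.range b, ((a : ℝ) + 1 + j) := by
  have h := Nat.ascFactorial_eq_factorial_mul_choose a b
  rw [ascProd] at h
  have h' := congrArg (Nat.cast : ℕ → ℝ) h
  push_cast at h'
  rw [h']; ring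

lemma numId (m t : ℕ) :
    ((t:ℝ) + 1) * ((m + t).choose m : ℝ) - (m : ℝ) * ((m + t).choose (m+1) : ℝ)
      = ((m + t + 1).choose (m+1) : ℝ) := by
  have hp : (m + t + 1).choose (m + 1) = (m + t).choose m + (m + t).choose (m+1) :=
    Nat.choose_succ_succ (m + t) m
  have hq : (m + t).choose (m + 1) * (m + 1) = (m + t).choose m * ((m + t) - m) :=
    Nat.choose_succ_right_eq (m + t) m
  rw [Nat.add_sub_cancel_left] at hq
  have hp' := congrArg (Nat.cast : ℕ → ℝ) hp
  have hq' := congrArg (Nat.cast : ℕ → ℝ) hq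
  push_cast at hp' hq'
  linear_combination -hp' - hq'

lemma prodClose (a δ : ℝ) (ha0 : 0 ≤ a) (ha1 : a ≤ 1) (x : ℕ → ℝ) :
    ∀ t : ℕ, (∀ j, j < t → 0 ≤ x j) → (∀ j, j < t → x j ≤ 2) →
      (∀ j, j < t → |x j - a| ≤ δ) →
      |(∏ j ∈ Finset.range t, x j) - a ^ t| ≤ (2 ^ t - 1) * δ
  | 0, _, _, _ => by simp
  | (t+1), h0, h2, hd => by
    have IH := prodClose a δ ha0 ha1 x t (fun j hj => h0 j (by omega))
      (fun j hj => h2 j (by omega)) (fun j hj => hd j (by omega))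
    have hδ : 0 ≤ δ := le_trans (abs_nonneg _) (hd t (by omega))
    have hxt0 : 0 ≤ x t := h0 t (by omega)
    have hat0 : (0:ℝ) ≤ a ^ t := pow_nonneg ha0 t
    have hat1 : a ^ t ≤ 1 := pow_le_one₀ ha0 ha1
    have h2t : (1:ℝ) ≤ 2 ^ t := one_le_pow₀ (by norm_num)
    rw [Finset.prod_range_succ, pow_succ]
    have key : (∏ j ∈ Finset.range t, x j) * x t - a ^ t * a
        = ((∏ j ∈ Finset.range t, x j) - a ^ t) * x t + a ^ t * (x t - a) := by ring
    rw [key]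
    calc |((∏ j ∈ Finset.range t, x j) - a ^ t) * x t + a ^ t * (x t - a)|
        ≤ |((∏ j ∈ Finset.range t, x j) - a ^ t) * x t| + |a ^ t * (x t - a)| := abs_add_le _ _
      _ = |(∏ j ∈ Finset.range t, x j) - a ^ t| * x t + a ^ t * |x t - a| := by
          rw [abs_mul, abs_mul, abs_of_nonneg hxt0, abs_of_nonneg hat0]
      _ ≤ ((2 ^ t - 1) * δ) * 2 + 1 * δ := by
          gcongr <;>
            first
              | nlinarith
              | exact IH
              | exact h2 t (by omega)
              | exact hd t (by omega)
      _ = (2 ^ (t+1) - 1) * δ := by ring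

/-- The decoding radius `τ_new(ℓ,s)` of the Power-IRS decoder for code length `n`,
dimension `k`, interleaving degree `m` and decoder parameters `(ℓ, s)`. -/
noncomputable def tauNew (n k m ℓ s : ℕ) : ℝ :=
  (n : ℝ) * (1 - ((s : ℝ) * ((m + s - 1).choose m : ℝ) -
        (m : ℝ) * ((m + s - 1).choose (m + 1) : ℝ)) /
      ((s : ℝ) * ((m + ℓ).choose m : ℝ)))
    - ((m : ℝ) / ((m : ℝ) + 1)) * ((ℓ : ℝ) / (s : ℝ)) * ((k : ℝ) - 1)
    - (1 / (s : ℝ)) * (1 - 1 / ((m + ℓ).choose m : ℝ))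

set_option maxHeartbeats 1000000 in
/-- Theorem 3 of the paper (asymptotic decoding radius): with `γ = ((k-1)/n)^{1/(m+1)}`
and parameter choice `(ℓ_i, s_i) = (i, round(γ·i) + 1)`, one has
`τ_new(ℓ_i, s_i)/n = 1 - ((k-1)/n)^{m/(m+1)} + O(1/i)`. -/
theorem asymptotic_decoding_radius (n k m : ℕ) (hk : 2 ≤ k) (hkn : k < n) (hm : 1 ≤ m) :
    ∃ C : ℝ, 0 < C ∧ ∀ i : ℕ, 0 < i → ∀ s : ℕ,
      (s : ℤ) = round ((((k : ℝ) - 1) / (n : ℝ)) ^ ((1 : ℝ) / ((m : ℝ) + 1)) * (i : ℝ)) + 1 →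
      |tauNew n k m i s / (n : ℝ) -
          (1 - (((k : ℝ) - 1) / (n : ℝ)) ^ ((m : ℝ) / ((m : ℝ) + 1)))| ≤ C / (i : ℝ) := by
  have hn0 : (0:ℝ) < n := by
    have : 0 < n := by omega
    exact_mod_cast this
  have hn1 : (1:ℝ) ≤ n := by
    have : 1 ≤ n := by omega
    exact_mod_cast this
  have hk2 : (2:ℝ) ≤ k := by exact_mod_cast hk
  have hkn' : (k:ℝ) < n := by exact_mod_cast hkn
  have hr0 : (0:ℝ) < ((k:ℝ) - 1) / (n:ℝ) := by
    apply div_pos <;> linarith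
  have hr1 : ((k:ℝ) - 1) / (n:ℝ) < 1 := by
    rw [div_lt_one hn0]; linarith
  refine ⟨2 ^ m * ((m:ℝ) + 3) +
      3 / ((((k : ℝ) - 1) / (n : ℝ)) ^ ((1 : ℝ) / ((m : ℝ) + 1))), by positivity, ?_⟩
  intro i hi s hs
  set γ : ℝ := (((k : ℝ) - 1) / (n : ℝ)) ^ ((1 : ℝ) / ((m : ℝ) + 1)) with hγdef
  have hγ0 : 0 < γ := Real.rpow_pos_of_pos hr0 _
  have hγ1 : γ ≤ 1 := Real.rpow_le_one hr0.le hr1.le (by positivity)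
  have hM0 : (0:ℝ) < (m:ℝ) + 1 := by positivity
  have hγpow : γ ^ (m+1) = ((k:ℝ) - 1) / (n:ℝ) := by
    rw [hγdef, ← Real.rpow_natCast ((((k : ℝ) - 1) / (n : ℝ)) ^ ((1 : ℝ) / ((m : ℝ) + 1))) (m+1),
      ← Real.rpow_mul hr0.le]
    rw [show (1:ℝ)/((m:ℝ)+1) * (((m+1 : ℕ)):ℝ) = 1 by push_cast; field_simp]
    exact Real.rpow_one _
  have hγm : (((k:ℝ) - 1) / (n:ℝ)) ^ ((m:ℝ)/((m:ℝ)+1)) = γ ^ m := by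
    rw [hγdef, ← Real.rpow_natCast ((((k : ℝ) - 1) / (n : ℝ)) ^ ((1 : ℝ) / ((m : ℝ) + 1))) m,
      ← Real.rpow_mul hr0.le]
    congr 1
    field_simp
  have hi0 : (0:ℝ) < i := by exact_mod_cast hi
  have hi1 : (1:ℝ) ≤ i := by exact_mod_cast hi
  have hγi0 : 0 < γ * i := by positivity
  -- bounds on s
  have hround := abs_sub_round (γ * i)
  have hsr : (s:ℝ) = ((round (γ * (i:ℝ)) : ℤ) : ℝ) + 1 := by exact_mod_cast hs
  have hround' := abs_le.mp hround
  have hslo : γ * i + 1/2 ≤ (s:ℝ) := by rw [hsr]; linarith [hround'.1, hround'.2]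
  have hshi : (s:ℝ) ≤ γ * i + 3/2 := by rw [hsr]; linarith [hround'.1, hround'.2]
  have hs0 : (0:ℝ) < s := by linarith
  have hsnat : 0 < s := by exact_mod_cast hs0
  obtain ⟨t, rfl⟩ : ∃ t, s = t + 1 := ⟨s - 1, by omega⟩
  push_cast at hslo hshi hs0 hsr
  -- basic quantities
  have hC0 : (0:ℝ) < ((m+i).choose m : ℝ) := by
    exact_mod_cast Nat.choose_pos (Nat.le_add_right m i)
  have hC1 : (1:ℝ) ≤ ((m+i).choose m : ℝ) := by
    exact_mod_cast Nat.choose_pos (Nat.le_add_right m i)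
  -- product identities
  have hfact : (Nat.factorial (m+1) : ℝ) = ((m:ℝ)+1) * (Nat.factorial m : ℝ) := by
    rw [Nat.factorial_succ]; push_cast; ring
  have h1 : ((m + t + 1).choose (m+1) : ℝ) * (Nat.factorial (m+1) : ℝ)
      = ((t:ℝ)+1) * ∏ j ∈ Finset.range m, ((t:ℝ) + 2 + (j:ℝ)) := by
    have h := chooseFact t (m+1)
    rw [show t + (m+1) = m + t + 1 from by omega] at h
    rw [h, Finset.prod_range_succ']
    rw [Finset.prod_congr rfl (fun j _ => show (t:ℝ) + 1 + ((j+1 : ℕ):ℝ) = (t:ℝ) + 2 + (j:ℝ) by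
      push_cast; ring)]
    push_cast; ring
  have h2 : ((m + i).choose m : ℝ) * (Nat.factorial m : ℝ)
      = ∏ j ∈ Finset.range m, ((i:ℝ) + 1 + (j:ℝ)) := by
    have h := chooseFact i m
    rw [show i + m = m + i from by omega] at h
    exact h
  rw [hfact] at h1
  have hN2pos : (0:ℝ) < ∏ j ∈ Finset.range m, ((i:ℝ) + 1 + (j:ℝ)) :=
    Finset.prod_pos (fun j _ => by positivity)
  have hfactpos : (0:ℝ) < (Nat.factorial m : ℝ) := by exact_mod_cast Nat.factorial_pos m
  -- the key fraction identity
  have hterm : ((m + t + 1).choose (m+1) : ℝ) / (((t:ℝ)+1) * ((m + i).choose m : ℝ))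
      = (∏ j ∈ Finset.range m, (((t:ℝ) + 2 + (j:ℝ)) / ((i:ℝ) + 1 + (j:ℝ)))) / ((m:ℝ)+1) := by
    rw [Finset.prod_div_distrib, div_div, div_eq_div_iff (by positivity) (by positivity)]
    linear_combination (-(((m + t + 1).choose (m+1) : ℝ) * ((m:ℝ)+1))) * h2 +
      ((m + i).choose m : ℝ) * h1
  -- the key formula for tauNew / n
  have key : tauNew n k m i (t+1) / (n:ℝ)
      = 1 - (∏ j ∈ Finset.range m, (((t:ℝ) + 2 + (j:ℝ)) / ((i:ℝ) + 1 + (j:ℝ)))) / ((m:ℝ)+1)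
        - (m:ℝ)/((m:ℝ)+1) * ((i:ℝ)/((t:ℝ)+1)) * (((k:ℝ)-1)/(n:ℝ))
        - 1/((n:ℝ)*((t:ℝ)+1)) * (1 - 1/((m+i).choose m : ℝ)) := by
    unfold tauNew
    rw [show m + (t+1) - 1 = m + t from by omega]
    push_cast
    rw [numId m t, hterm]
    field_simp
  rw [key, hγm]
  clear key hterm h1 h2 hfact hround hsr hround' hN2pos hfactpos hs hsnat
  set P : ℝ := ∏ j ∈ Finset.range m, (((t:ℝ) + 2 + (j:ℝ)) / ((i:ℝ) + 1 + (j:ℝ))) with hPdef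
  set T3 : ℝ := 1/((n:ℝ)*((t:ℝ)+1)) * (1 - 1/((m+i).choose m : ℝ)) with hT3def
  clear_value T3
  rw [show ((k:ℝ)-1)/(n:ℝ) = γ^(m+1) from hγpow.symm]
  have hsplit : 1 - P / ((m:ℝ)+1) - (m:ℝ)/((m:ℝ)+1) * ((i:ℝ)/((t:ℝ)+1)) * γ^(m+1) - T3
      - (1 - γ ^ m)
      = -((P - γ^m) / ((m:ℝ)+1))
        + -((m:ℝ)/((m:ℝ)+1) * (((i:ℝ)/((t:ℝ)+1)) * γ^(m+1) - γ^m))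
        + -T3 := by
    field_simp
    ring
  rw [hsplit]
  -- bound the three pieces
  set δ : ℝ := ((m:ℝ)+3)/(i:ℝ) with hδdef
  clear_value δ
  have hδ0 : 0 ≤ δ := by rw [hδdef]; positivity
  have hE1 : |P - γ^m| ≤ (2^m - 1) * δ := by
    apply prodClose γ δ hγ0.le hγ1
        (fun j => ((t:ℝ) + 2 + (j:ℝ)) / ((i:ℝ) + 1 + (j:ℝ))) m
    · intro j hj; positivity
    · intro j hj
      have hden : (0:ℝ) < (i:ℝ) + 1 + (j:ℝ) := by positivity
      rw [div_le_iff₀ hden]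
      have hj0 : (0:ℝ) ≤ (j:ℝ) := Nat.cast_nonneg j
      have hgi : γ * i ≤ 1 * i := mul_le_mul_of_nonneg_right hγ1 hi0.le
      linarith only [hshi, hgi, hi1, hj0]
    · intro j hj
      have hden : (0:ℝ) < (i:ℝ) + 1 + (j:ℝ) := by positivity
      have hj0 : (0:ℝ) ≤ (j:ℝ) := Nat.cast_nonneg j
      have hjm : (j:ℝ) + 1 ≤ (m:ℝ) := by exact_mod_cast hj
      have hδi : δ * (i:ℝ) = (m:ℝ) + 3 := by rw [hδdef]; field_simp
      have hup : ((t:ℝ) + 2 + (j:ℝ)) / ((i:ℝ) + 1 + (j:ℝ)) ≤ γ + δ := by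
        rw [div_le_iff₀ hden]
        have hexp : (γ + δ) * ((i:ℝ) + 1 + (j:ℝ))
            = γ * i + γ * (1 + (j:ℝ)) + δ * (i:ℝ) + δ * (1 + (j:ℝ)) := by ring
        have hp1 : 0 ≤ γ * (1 + (j:ℝ)) := by positivity
        have hp2 : 0 ≤ δ * (1 + (j:ℝ)) := mul_nonneg hδ0 (by positivity)
        linarith only [hexp, hδi, hp1, hp2, hshi, hjm]
      have hlo : γ ≤ ((t:ℝ) + 2 + (j:ℝ)) / ((i:ℝ) + 1 + (j:ℝ)) := by
        rw [le_div_iff₀ hden]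
        have hexp : γ * ((i:ℝ) + 1 + (j:ℝ)) = γ * i + γ * (1 + (j:ℝ)) := by ring
        have hp : γ * (1 + (j:ℝ)) ≤ 1 + (j:ℝ) :=
          mul_le_of_le_one_left (by positivity) hγ1
        linarith only [hexp, hp, hslo]
      rw [abs_le]
      exact ⟨by linarith only [hlo, hδ0], by linarith only [hup]⟩
  have hpow1 : γ ^ m ≤ 1 := pow_le_one₀ hγ0.le hγ1
  have hpow0 : (0:ℝ) ≤ γ ^ m := by positivity
  have habs2 : |(i:ℝ) * γ - ((t:ℝ)+1)| ≤ 3/2 := by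
    rw [abs_le]
    have : (i:ℝ) * γ = γ * i := mul_comm _ _
    constructor <;> linarith
  have hB1 : |-((P - γ^m) / ((m:ℝ)+1))| ≤ 2^m * ((m:ℝ)+3) / i := by
    rw [abs_neg, abs_div, abs_of_pos hM0]
    have hM1 : (1:ℝ) ≤ (m:ℝ) + 1 := by
      have : (0:ℝ) ≤ (m:ℝ) := Nat.cast_nonneg m
      linarith
    have h2m : (1:ℝ) ≤ 2 ^ m := one_le_pow₀ (by norm_num)
    calc |P - γ^m| / ((m:ℝ)+1) ≤ ((2^m - 1) * δ) / 1 := by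
          apply div_le_div₀ (by nlinarith) hE1 (by norm_num) hM1
      _ = (2^m - 1) * δ := by ring
      _ ≤ 2^m * δ := by nlinarith
      _ = 2^m * ((m:ℝ)+3) / i := by rw [hδdef]; ring
  have hB2 : |-((m:ℝ)/((m:ℝ)+1) * (((i:ℝ)/((t:ℝ)+1)) * γ^(m+1) - γ^m))| ≤ (3/2) / (γ * i) := by
    rw [abs_neg, abs_mul]
    have hmM : |(m:ℝ)/((m:ℝ)+1)| ≤ 1 := by
      rw [abs_of_nonneg (by positivity)]
      rw [div_le_one hM0]
      linarith
    have hE2eq : ((i:ℝ)/((t:ℝ)+1)) * γ^(m+1) - γ^m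
        = γ^m * (((i:ℝ) * γ - ((t:ℝ)+1)) / ((t:ℝ)+1)) := by
      rw [pow_succ]
      field_simp
    have hE2 : |((i:ℝ)/((t:ℝ)+1)) * γ^(m+1) - γ^m| ≤ (3/2) / (γ * i) := by
      rw [hE2eq, abs_mul, abs_div, abs_of_nonneg hpow0, abs_of_pos hs0, ← mul_div_assoc]
      rw [div_le_div_iff₀ hs0 hγi0]
      have h1 : γ^m * |(i:ℝ) * γ - ((t:ℝ)+1)| ≤ 3/2 := by nlinarith [abs_nonneg ((i:ℝ) * γ - ((t:ℝ)+1))]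
      nlinarith [mul_nonneg hpow0 (abs_nonneg ((i:ℝ) * γ - ((t:ℝ)+1)))]
    calc |(m:ℝ)/((m:ℝ)+1)| * |((i:ℝ)/((t:ℝ)+1)) * γ^(m+1) - γ^m|
        ≤ 1 * ((3/2) / (γ * i)) := by
          apply mul_le_mul hmM hE2 (abs_nonneg _) (by norm_num)
      _ = (3/2) / (γ * i) := by ring
  have hB3 : |-T3| ≤ 1 / (γ * i) := by
    rw [abs_neg, hT3def]
    have h1C : 0 ≤ 1 - 1/((m+i).choose m : ℝ) := by
      have : 1/((m+i).choose m : ℝ) ≤ 1 := by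
        rw [div_le_one hC0]; exact hC1
      linarith
    have h1C' : 1 - 1/((m+i).choose m : ℝ) ≤ 1 := by
      have : 0 ≤ 1/((m+i).choose m : ℝ) := by positivity
      linarith
    have hns : 0 < (n:ℝ) * ((t:ℝ)+1) := by positivity
    rw [abs_of_nonneg (by positivity)]
    calc 1/((n:ℝ)*((t:ℝ)+1)) * (1 - 1/((m+i).choose m : ℝ))
        ≤ 1/((n:ℝ)*((t:ℝ)+1)) * 1 := by
          apply mul_le_mul_of_nonneg_left h1C' (by positivity)
      _ = 1/((n:ℝ)*((t:ℝ)+1)) := by ring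
      _ ≤ 1/(γ * i) := by
          apply one_div_le_one_div_of_le hγi0
          nlinarith
  calc |(-((P - γ^m) / ((m:ℝ)+1)))
        + -((m:ℝ)/((m:ℝ)+1) * (((i:ℝ)/((t:ℝ)+1)) * γ^(m+1) - γ^m)) + -T3|
      ≤ |-((P - γ^m) / ((m:ℝ)+1))|
        + |-((m:ℝ)/((m:ℝ)+1) * (((i:ℝ)/((t:ℝ)+1)) * γ^(m+1) - γ^m))| + |-T3| :=
        abs_add_three _ _ _
    _ ≤ 2^m * ((m:ℝ)+3) / i + (3/2) / (γ * i) + 1 / (γ * i) := by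
        gcongr
    _ ≤ (2 ^ m * ((m:ℝ) + 3) + 3 / γ) / i := by
        rw [add_div]
        have e2 : (3/2:ℝ)/(γ*i) = (3/2) * (1/(γ*i)) := by ring
        have e3 : (1:ℝ)/(γ*i) = 1 * (1/(γ*i)) := by ring
        have e4 : (3:ℝ)/γ/(i:ℝ) = 3 * (1/(γ*i)) := by ring
        have h0 : 0 ≤ 1/(γ*i) := by positivity
        linarith only [e2, e3, e4, h0]
end

section
/- For any integers n > k ≥ 2, m ≥ 1, and any real ε > 0, there exist positive integers s ≤ ℓ such that τ_new(ℓ,s) ≥ n·(1 - R^{m/(m+1)} - ε), where R := k/n and τ_new(ℓ,s) := n·[1 - (s·C(m+s-1,m) - m·C(m+s-1,m+1))/(s·C(m+ℓ,m))] - (m/(m+1))·(ℓ/s)·(k-1) - (1/s)·[1 - 1/C(m+ℓ,m)]. -/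
/-- The binomial identity `s·C(m+s-1,m) − m·C(m+s-1,m+1) = C(m+s-1,m)·(s+m)/(m+1)`. -/
lemma choose_combo_eq (m s : ℕ) (hs : 1 ≤ s) :
    (s : ℝ) * ((m + s - 1).choose m : ℝ) - (m : ℝ) * ((m + s - 1).choose (m + 1) : ℝ)
      = ((m + s - 1).choose m : ℝ) * ((s : ℝ) + m) / ((m : ℝ) + 1) := by
  have h := Nat.choose_succ_right_eq (m + s - 1) m
  have hsub : m + s - 1 - m = s - 1 := by omega
  rw [hsub] at h
  have h' : ((m + s - 1).choose (m + 1) : ℝ) * ((m : ℝ) + 1)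
      = ((m + s - 1).choose m : ℝ) * ((s : ℝ) - 1) := by
    have := congrArg (Nat.cast : ℕ → ℝ) h
    push_cast [Nat.cast_sub hs] at this
    linarith [this]
  have hm1 : ((m : ℝ) + 1) ≠ 0 := by positivity
  rw [eq_div_iff hm1]
  linear_combination (-(m : ℝ)) * h'

/-- Bound on the main fraction in `tauNew`. -/
lemma main_term_le (m s ℓ : ℕ) (hm : 1 ≤ m) (hs : 1 ≤ s) (hl : 1 ≤ ℓ) :
    ((s : ℝ) * ((m + s - 1).choose m : ℝ) - (m : ℝ) * ((m + s - 1).choose (m + 1) : ℝ)) /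
      ((s : ℝ) * ((m + ℓ).choose m : ℝ))
      ≤ ((s : ℝ) + m) ^ (m + 1) / (((m : ℝ) + 1) * s * (ℓ : ℝ) ^ m) := by
  have hs0 : (0 : ℝ) < (s : ℝ) := by exact_mod_cast hs
  have hl0 : (0 : ℝ) < (ℓ : ℝ) := by exact_mod_cast hl
  have hC0 : (0 : ℝ) < ((m + ℓ).choose m : ℝ) := by
    exact_mod_cast Nat.choose_pos (Nat.le_add_right m ℓ)
  have hm1 : (0 : ℝ) < (m : ℝ) + 1 := by positivity
  rw [choose_combo_eq m s hs]
  -- A ≤ (s+m)^m / m!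
  have hA : ((m + s - 1).choose m : ℝ) ≤ ((s : ℝ) + m) ^ m / (m.factorial : ℝ) := by
    refine (Nat.choose_le_pow_div m (m + s - 1)).trans ?_
    gcongr
    have : (m + s - 1 : ℕ) ≤ s + m := by omega
    calc ((m + s - 1 : ℕ) : ℝ) ≤ ((s + m : ℕ) : ℝ) := by exact_mod_cast this
      _ = (s : ℝ) + m := by push_cast; ring
  -- ℓ^m / m! ≤ C
  have hC : (ℓ : ℝ) ^ m / (m.factorial : ℝ) ≤ ((m + ℓ).choose m : ℝ) := by
    have h := Nat.pow_le_choose (α := ℝ) m (m + ℓ)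
    have hsub : m + ℓ + 1 - m = ℓ + 1 := by omega
    rw [hsub] at h
    refine le_trans ?_ h
    gcongr
    push_cast
    linarith
  have hfac : (0 : ℝ) < (m.factorial : ℝ) := by exact_mod_cast Nat.factorial_pos m
  have key : ((m + s - 1).choose m : ℝ) * (ℓ : ℝ) ^ m ≤ ((s : ℝ) + m) ^ m * ((m + ℓ).choose m : ℝ) := by
    calc ((m + s - 1).choose m : ℝ) * (ℓ : ℝ) ^ m
        ≤ (((s : ℝ) + m) ^ m / (m.factorial : ℝ)) * ((m.factorial : ℝ) * ((m + ℓ).choose m : ℝ)) := by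
          have h1 : (ℓ : ℝ) ^ m ≤ (m.factorial : ℝ) * ((m + ℓ).choose m : ℝ) := by
            rw [div_le_iff₀ hfac] at hC; linarith [hC]
          have h2 : (0 : ℝ) ≤ ((m + s - 1).choose m : ℝ) := by positivity
          have h3 : (0 : ℝ) ≤ ((s : ℝ) + m) ^ m / (m.factorial : ℝ) := by positivity
          exact mul_le_mul hA h1 (by positivity) h3
      _ = ((s : ℝ) + m) ^ m * ((m + ℓ).choose m : ℝ) := by field_simp
  rw [div_le_div_iff₀ (by positivity) (by positivity), pow_succ]
  have heq : ((m + s - 1).choose m : ℝ) * ((s : ℝ) + m) / ((m : ℝ) + 1) * (((m : ℝ) + 1) * s * (ℓ : ℝ) ^ m)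
      = ((m + s - 1).choose m : ℝ) * ((s : ℝ) + m) * s * (ℓ : ℝ) ^ m := by
    field_simp
  rw [heq]
  have hpos : (0 : ℝ) ≤ (s : ℝ) * ((s : ℝ) + m) := by positivity
  have hmul := mul_le_mul_of_nonneg_left key hpos
  have hone : (1 : ℝ) ≤ (m : ℝ) + 1 := by
    have : (0 : ℝ) ≤ (m : ℝ) := by positivity
    linarith
  calc ((m + s - 1).choose m : ℝ) * ((s : ℝ) + m) * s * (ℓ : ℝ) ^ m
      = (s : ℝ) * ((s : ℝ) + m) * (((m + s - 1).choose m : ℝ) * (ℓ : ℝ) ^ m) := by ring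
    _ ≤ (s : ℝ) * ((s : ℝ) + m) * (((s : ℝ) + m) ^ m * ((m + ℓ).choose m : ℝ)) := hmul
    _ = ((s : ℝ) + m) ^ m * ((s : ℝ) + m) * ((s : ℝ) * ((m + ℓ).choose m : ℝ)) := by ring

/-- Corollary 1 of the paper: for any `ε > 0` there are decoder parameters
`s ≤ ℓ` with `τ_new(ℓ,s) ≥ n(1 - R^{m/(m+1)} - ε)`, where `R = k/n`. -/
theorem decoding_radius_eps_close_to_limit (n k m : ℕ) (hk : 2 ≤ k) (hkn : k < n)
    (hm : 1 ≤ m) (ε : ℝ) (hε : 0 < ε) :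
    ∃ s ℓ : ℕ, 0 < s ∧ s ≤ ℓ ∧
      tauNew n k m ℓ s ≥
        (n : ℝ) * (1 - ((k : ℝ) / (n : ℝ)) ^ ((m : ℝ) / ((m : ℝ) + 1)) - ε) := by
  have hn0 : (0 : ℝ) < (n : ℝ) := by exact_mod_cast lt_of_le_of_lt (Nat.zero_le k) hkn
  have hk0 : (0 : ℝ) < (k : ℝ) := by exact_mod_cast lt_of_lt_of_le (by norm_num) hk
  set R : ℝ := (k : ℝ) / (n : ℝ) with hR
  have hR0 : 0 < R := by positivity
  have hR1 : R < 1 := (div_lt_one hn0).mpr (by exact_mod_cast hkn)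
  have hm1 : (0 : ℝ) < (m : ℝ) + 1 := by positivity
  set d : ℝ := R ^ ((1 : ℝ) / ((m : ℝ) + 1)) with hd
  have hd0 : 0 < d := Real.rpow_pos_of_pos hR0 _
  have hd1 : d ≤ 1 := Real.rpow_le_one hR0.le hR1.le (by positivity)
  set c : ℝ := d⁻¹ with hc
  have hc0 : 0 < c := by positivity
  have hc1 : 1 ≤ c := one_le_inv_iff₀.mpr ⟨hd0, hd1⟩
  -- d ^ (m+1) = R and d ^ m = R ^ (m/(m+1))
  have hdm1 : d ^ (m + 1) = R := by
    rw [hd, ← Real.rpow_natCast (R ^ ((1 : ℝ) / ((m : ℝ) + 1))) (m + 1), ← Real.rpow_mul hR0.le]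
    push_cast
    rw [div_mul_cancel₀ _ hm1.ne', Real.rpow_one]
  have hdm : R ^ ((m : ℝ) / ((m : ℝ) + 1)) = d ^ m := by
    rw [hd, ← Real.rpow_natCast (R ^ ((1 : ℝ) / ((m : ℝ) + 1))) m, ← Real.rpow_mul hR0.le]
    congr 1
    ring
  -- the auxiliary bounding function
  set F : ℕ → ℝ := fun s => (n : ℝ) * ((1 + (m : ℝ) * (1 / (s : ℝ))) ^ (m + 1) * d ^ m / ((m : ℝ) + 1))
      + ((m : ℝ) / ((m : ℝ) + 1)) * (c + 1 / (s : ℝ)) * ((k : ℝ) - 1) + 1 / (s : ℝ) with hF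
  set L : ℝ := (n : ℝ) * (d ^ m / ((m : ℝ) + 1))
      + ((m : ℝ) / ((m : ℝ) + 1)) * c * ((k : ℝ) - 1) with hL
  have h0 : Filter.Tendsto (fun s : ℕ => 1 / (s : ℝ)) Filter.atTop (nhds 0) :=
    tendsto_one_div_atTop_nhds_zero_nat
  have hFt : Filter.Tendsto F Filter.atTop (nhds L) := by
    have h1 : Filter.Tendsto (fun s : ℕ => (1 + (m : ℝ) * (1 / (s : ℝ))) ^ (m + 1))
        Filter.atTop (nhds ((1 + (m : ℝ) * 0) ^ (m + 1))) :=
      (tendsto_const_nhds.add (tendsto_const_nhds.mul h0)).pow _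
    have h2 := (((h1.mul (tendsto_const_nhds (α := ℕ) (x := d ^ m))).div_const ((m : ℝ) + 1)).const_mul (n : ℝ)).add
      ((((tendsto_const_nhds (α := ℕ) (x := c)).add h0).const_mul ((m : ℝ) / ((m : ℝ) + 1))).mul_const ((k : ℝ) - 1))
    have h3 := h2.add h0
    have hXL : (n : ℝ) * ((1 + (m : ℝ) * 0) ^ (m + 1) * d ^ m / ((m : ℝ) + 1))
        + ((m : ℝ) / ((m : ℝ) + 1)) * (c + 0) * ((k : ℝ) - 1) + 0 = L := by
      rw [hL]; ring_nf
    rw [hXL] at h3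
    exact h3
  -- the limit is below n * (d^m + ε)
  have hndm : (n : ℝ) * d ^ m = (k : ℝ) * c := by
    have h1 : (n : ℝ) * d ^ (m + 1) = k := by
      rw [hdm1, hR, mul_div_cancel₀ _ hn0.ne']
    have : (n : ℝ) * d ^ m * d = k := by rw [← h1]; ring
    field_simp [hc, hd0.ne'] at this ⊢
    rw [hc, ← this, mul_inv_cancel_right₀ hd0.ne']
  have hm0 : (0 : ℝ) ≤ (m : ℝ) := by positivity
  have hLlt : L < (n : ℝ) * (d ^ m + ε) := by
    have hLle : L ≤ (n : ℝ) * d ^ m := by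
      rw [hL, hndm]
      rw [show (n : ℝ) * (d ^ m / ((m : ℝ) + 1)) = (n : ℝ) * d ^ m / ((m : ℝ) + 1) by ring, hndm]
      rw [show (k : ℝ) * c / ((m : ℝ) + 1) + ((m : ℝ) / ((m : ℝ) + 1)) * c * ((k : ℝ) - 1)
          = ((k : ℝ) * c + (m : ℝ) * (c * ((k : ℝ) - 1))) / ((m : ℝ) + 1) by ring]
      rw [div_le_iff₀ hm1]
      nlinarith [mul_nonneg hm0 hc0.le]
    have e : (n : ℝ) * (d ^ m + ε) = (n : ℝ) * d ^ m + (n : ℝ) * ε := by ring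
    have := mul_pos hn0 hε
    linarith
  obtain ⟨s, hs⟩ := ((hFt.eventually_lt_const hLlt).and (Filter.eventually_ge_atTop 1)).exists
  obtain ⟨hFs, hs1⟩ := hs
  have hs0 : (0 : ℝ) < (s : ℝ) := by exact_mod_cast hs1
  set ℓ : ℕ := ⌈c * (s : ℝ)⌉₊ with hℓ
  have hcs : c * (s : ℝ) ≤ (ℓ : ℝ) := Nat.le_ceil _
  have hℓub : (ℓ : ℝ) ≤ c * (s : ℝ) + 1 := (Nat.ceil_lt_add_one (by positivity)).le
  have hsℓ : s ≤ ℓ := by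
    have h1s : (s : ℝ) ≤ c * (s : ℝ) := by
      calc (s : ℝ) = 1 * (s : ℝ) := (one_mul _).symm
        _ ≤ c * (s : ℝ) := mul_le_mul_of_nonneg_right hc1 hs0.le
    have : (s : ℝ) ≤ (ℓ : ℝ) := le_trans h1s hcs
    exact_mod_cast this
  have hl1 : 1 ≤ ℓ := le_trans hs1 hsℓ
  have hl0 : (0 : ℝ) < (ℓ : ℝ) := by exact_mod_cast hl1
  refine ⟨s, ℓ, hs1, hsℓ, ?_⟩
  rw [hdm]
  -- main computation
  have hC0 : (0 : ℝ) < ((m + ℓ).choose m : ℝ) := by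
    exact_mod_cast Nat.choose_pos (Nat.le_add_right m ℓ)
  have hmain := main_term_le m s ℓ hm hs1 hl1
  -- step 1 : U ≤ first term of F s
  have hU : ((s : ℝ) + m) ^ (m + 1) / (((m : ℝ) + 1) * s * (ℓ : ℝ) ^ m)
      ≤ (1 + (m : ℝ) * (1 / (s : ℝ))) ^ (m + 1) * d ^ m / ((m : ℝ) + 1) := by
    have hstep : ((s : ℝ) + m) ^ (m + 1) / (((m : ℝ) + 1) * s * (ℓ : ℝ) ^ m)
        ≤ ((s : ℝ) + m) ^ (m + 1) / (((m : ℝ) + 1) * s * (c * (s : ℝ)) ^ m) := by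
      have hp : (c * (s : ℝ)) ^ m ≤ (ℓ : ℝ) ^ m := pow_le_pow_left₀ (by positivity) hcs m
      apply div_le_div_of_nonneg_left (by positivity) (by positivity)
      exact mul_le_mul_of_nonneg_left hp (by positivity)
    refine hstep.trans_eq ?_
    have h1 : (1 + (m : ℝ) * (1 / (s : ℝ))) = ((s : ℝ) + m) / (s : ℝ) := by
      field_simp
    rw [h1, div_pow, mul_pow]
    rw [hc, inv_pow]
    field_simp
    ring
  -- step 2 : the tail term
  have htail : (1 / (s : ℝ)) * (1 - 1 / ((m + ℓ).choose m : ℝ)) ≤ 1 / (s : ℝ) := by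
    have h1 : 1 - 1 / ((m + ℓ).choose m : ℝ) ≤ 1 := by
      have : (0 : ℝ) ≤ 1 / ((m + ℓ).choose m : ℝ) := by positivity
      linarith
    calc (1 / (s : ℝ)) * (1 - 1 / ((m + ℓ).choose m : ℝ)) ≤ (1 / (s : ℝ)) * 1 := by
          apply mul_le_mul_of_nonneg_left h1 (by positivity)
      _ = 1 / (s : ℝ) := mul_one _
  -- step 3 : the middle term
  have hmid : ((m : ℝ) / ((m : ℝ) + 1)) * ((ℓ : ℝ) / (s : ℝ)) * ((k : ℝ) - 1)
      ≤ ((m : ℝ) / ((m : ℝ) + 1)) * (c + 1 / (s : ℝ)) * ((k : ℝ) - 1) := by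
    have hls : (ℓ : ℝ) / (s : ℝ) ≤ c + 1 / (s : ℝ) := by
      rw [div_le_iff₀ hs0]
      calc (ℓ : ℝ) ≤ c * (s : ℝ) + 1 := hℓub
        _ = (c + 1 / (s : ℝ)) * (s : ℝ) := by field_simp
    have hk1 : (0 : ℝ) ≤ (k : ℝ) - 1 := by
      have : (1 : ℝ) ≤ (k : ℝ) := by exact_mod_cast le_trans (by norm_num) hk
      linarith
    have hmm : (0 : ℝ) ≤ (m : ℝ) / ((m : ℝ) + 1) := by positivity
    apply mul_le_mul_of_nonneg_right _ hk1
    exact mul_le_mul_of_nonneg_left hls hmm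
  -- combine
  have hbound : tauNew n k m ℓ s ≥ (n : ℝ) - F s := by
    rw [tauNew, hF]
    have h1 : (n : ℝ) * (1 - ((s : ℝ) * ((m + s - 1).choose m : ℝ) -
          (m : ℝ) * ((m + s - 1).choose (m + 1) : ℝ)) / ((s : ℝ) * ((m + ℓ).choose m : ℝ)))
        ≥ (n : ℝ) - (n : ℝ) * ((1 + (m : ℝ) * (1 / (s : ℝ))) ^ (m + 1) * d ^ m / ((m : ℝ) + 1)) := by
      have hTX := hmain.trans hU
      have := mul_le_mul_of_nonneg_left hTX hn0.le
      linarith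
    dsimp only
    linarith [h1, hmid, htail]
  have hfinal : (n : ℝ) - F s ≥ (n : ℝ) * (1 - d ^ m - ε) := by
    have e : (n : ℝ) * (1 - d ^ m - ε) = (n : ℝ) - (n : ℝ) * (d ^ m + ε) := by ring
    rw [e]
    linarith [hFs]
  linarith [hbound, hfinal]
end

section
/- Shift-invariance of Padé solutions under adding a codeword: fix positive integers s ≤ ℓ, τ and the interleaved Reed–Solomon setup. Suppose ((λ_i)_{|i|<s}, (ψ_j)_{1≤|j|≤ℓ}) are polynomials satisfying, for all j with 1 ≤ |j| ≤ ℓ: Σ_{i ⪯ j, |i| < s} λ_i·C(j,i)·R^{j-i}·G^{|i|} ≡ ψ_j (mod G_j) and deg ψ_j < τs + |j|(k-1) + 1, where G_j := x^{τs+|j|(n-1)+1} for |j| < s and G_j := G^s for |j| ≥ s. Let f̂ = (f̂_1,...,f̂_m) ∈ F[x]^m with deg f̂_t < k, set R̂ := R + f̂ (componentwise), define ψ_0 := λ_0 (the λ indexed by the zero multi-index), and define ψ̂_j := Σ_{h ⪯ j} C(j,h)·f̂^h·ψ_{j-h}. Then for all j with 1 ≤ |j| ≤ ℓ: Σ_{i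 ⪯ j, |i| < s} λ_i·C(j,i)·R̂^{j-i}·G^{|i|} ≡ ψ̂_j (mod G_j) and deg ψ̂_j < τs + |j|(k-1) + 1. -/
open Polynomial Finset

namespace PadeAux

variable {F : Type*} [CommRing F] {m : ℕ}

lemma Iic_pi_eq (u : Fin m → ℕ) :
    Finset.Iic u = Fintype.piFinset fun t => Finset.Iic (u t) := by
  ext x; simp [Fintype.mem_piFinset, Pi.le_def]

lemma choose_prod_identity (i h j : Fin m → ℕ) (hij : ∀ t, i t + h t ≤ j t) :
    (∏ t, (j t).choose (i t)) * ∏ t, (j t - i t).choose (h t)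
      = (∏ t, (j t).choose (h t)) * ∏ t, (j t - h t).choose (i t) := by
  rw [← Finset.prod_mul_distrib, ← Finset.prod_mul_distrib]
  refine Finset.prod_congr rfl fun t _ => ?_
  have key : ∀ a b n : ℕ, a + b ≤ n →
      n.choose a * (n - a).choose b = n.choose (a + b) * (a + b).choose a := by
    intro a b n hab
    have := Nat.choose_mul (k := a + b) (n := n) (s := a) (Nat.le_add_right a b)
    simpa [Nat.add_sub_cancel_left] using this.symm
  rw [key _ _ _ (hij t), add_comm (i t) (h t),
    key _ _ _ (by have := hij t; omega : h t + i t ≤ j t),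
    add_comm (h t) (i t), Nat.choose_symm_add]

lemma multibinom (f g : Fin m → Polynomial F) (u : Fin m → ℕ) :
    ∏ t, (f t + g t) ^ u t =
      ∑ h ∈ Finset.Iic u, ((∏ t, (u t).choose (h t) : ℕ) : Polynomial F) *
        (∏ t, g t ^ h t) * (∏ t, f t ^ (u t - h t)) := by
  have hcomp : ∀ t : Fin m, (f t + g t) ^ u t =
      ∑ c ∈ Finset.Iic (u t),
        (((u t).choose c : ℕ) : Polynomial F) * g t ^ c * f t ^ (u t - c) := by
    intro t
    rw [add_comm (f t) (g t), add_pow]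
    have : Finset.range (u t + 1) = Finset.Iic (u t) := by
      ext c; simp [Nat.lt_succ_iff]
    rw [this]
    exact Finset.sum_congr rfl fun c _ => by ring
  calc ∏ t, (f t + g t) ^ u t
      = ∏ t, ∑ c ∈ Finset.Iic (u t),
          (((u t).choose c : ℕ) : Polynomial F) * g t ^ c * f t ^ (u t - c) :=
        Finset.prod_congr rfl fun t _ => hcomp t
    _ = ∑ h ∈ Fintype.piFinset (fun t => Finset.Iic (u t)),
          ∏ t, ((((u t).choose (h t) : ℕ) : Polynomial F) * g t ^ h t * f t ^ (u t - h t)) :=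
        Finset.prod_univ_sum _ _
    _ = _ := by
        rw [← Iic_pi_eq]
        refine Finset.sum_congr rfl fun h _ => ?_
        rw [Finset.prod_mul_distrib, Finset.prod_mul_distrib, Nat.cast_prod]

lemma sum_sub_swap (j : Fin m → ℕ) (A : (Fin m → ℕ) → (Fin m → ℕ) → Polynomial F) :
    ∑ i ∈ Finset.Iic j, ∑ h ∈ Finset.Iic (j - i), A i h
      = ∑ h ∈ Finset.Iic j, ∑ i ∈ Finset.Iic (j - h), A i h := by
  rw [Finset.sum_sigma', Finset.sum_sigma']
  refine Finset.sum_nbij' (fun p => ⟨p.2, p.1⟩) (fun p => ⟨p.2, p.1⟩) ?_ ?_ ?_ ?_ ?_ <;>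
    simp only [Finset.mem_sigma, Finset.mem_Iic, Pi.le_def, Pi.sub_apply]
  · rintro ⟨a, b⟩ ⟨h1, h2⟩
    exact ⟨fun t => by have := h1 t; have := h2 t; omega,
           fun t => by have := h1 t; have := h2 t; omega⟩
  · rintro ⟨a, b⟩ ⟨h1, h2⟩
    exact ⟨fun t => by have := h1 t; have := h2 t; omega,
           fun t => by have := h1 t; have := h2 t; omega⟩
  · rintro ⟨a, b⟩ _; trivial
  · rintro ⟨a, b⟩ _; trivial
  · rintro ⟨a, b⟩ _; trivial

end PadeAux

/-- Theorem 4 of the paper (shift-invariance of Padé solutions under adding a codeword):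
if `((λ_i), (ψ_j))` is a solution of the Hermite–Padé problem for the interpolation
polynomials `R`, then `((λ_i), (ψ̂_j))` with `ψ̂_j := ∑_{h ⪯ j} C(j,h)·f̂^h·ψ_{j-h}`
(and `ψ_0 := λ_0`) is a solution of the problem for `R̂ := R + f̂`. -/
theorem pade_solution_shift_invariance (F : Type*) [Field F] [Fintype F]
    (n k m : ℕ) (hk : k < n) (hm : 1 ≤ m)
    (α : Fin n → F) (hα : Function.Injective α)
    (G : Polynomial F) (hG : G = ∏ i : Fin n, (X - C (α i)))
    (R : Fin m → Polynomial F) (hRdeg : ∀ t, (R t).degree < (n : ℕ))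
    (s ℓ τ : ℕ) (hs : 0 < s) (hsℓ : s ≤ ℓ) (hτ : 0 < τ)
    (lam psi : (Fin m → ℕ) → Polynomial F)
    (hlamdeg : ∀ i : Fin m → ℕ, ∑ t, i t < s → lam i ≠ 0 →
      ((lam i).natDegree : ℤ) < (τ : ℤ) * s - (∑ t, i t) + 1)
    (hcong : ∀ j : Fin m → ℕ, 1 ≤ ∑ t, j t → ∑ t, j t ≤ ℓ →
      (if (∑ t, j t) < s then (X : Polynomial F) ^ (τ * s + (∑ t, j t) * (n - 1) + 1)
        else G ^ s) ∣
        (∑ i ∈ (Finset.Iic j).filter (fun i => ∑ t, i t < s),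
          lam i * (((∏ t, (j t).choose (i t) : ℕ) : Polynomial F) *
            (∏ t, R t ^ (j t - i t)) * G ^ (∑ t, i t)) - psi j))
    (hpsideg : ∀ j : Fin m → ℕ, 1 ≤ ∑ t, j t → ∑ t, j t ≤ ℓ → psi j ≠ 0 →
      ((psi j).natDegree : ℤ) < (τ : ℤ) * s + (∑ t, j t) * ((k : ℤ) - 1) + 1)
    (fhat : Fin m → Polynomial F) (hfhat : ∀ t, (fhat t).degree < (k : ℕ))
    (hpsi0 : psi 0 = lam 0) :
    ∀ j : Fin m → ℕ, 1 ≤ ∑ t, j t → ∑ t, j t ≤ ℓ →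
      ((if (∑ t, j t) < s then (X : Polynomial F) ^ (τ * s + (∑ t, j t) * (n - 1) + 1)
        else G ^ s) ∣
        (∑ i ∈ (Finset.Iic j).filter (fun i => ∑ t, i t < s),
          lam i * (((∏ t, (j t).choose (i t) : ℕ) : Polynomial F) *
            (∏ t, (R t + fhat t) ^ (j t - i t)) * G ^ (∑ t, i t)) -
          ∑ h ∈ Finset.Iic j,
            ((∏ t, (j t).choose (h t) : ℕ) : Polynomial F) *
              (∏ t, fhat t ^ h t) * psi (j - h))) ∧
      ((∑ h ∈ Finset.Iic j,
          ((∏ t, (j t).choose (h t) : ℕ) : Polynomial F) *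
            (∏ t, fhat t ^ h t) * psi (j - h)) ≠ 0 →
        (((∑ h ∈ Finset.Iic j,
            ((∏ t, (j t).choose (h t) : ℕ) : Polynomial F) *
              (∏ t, fhat t ^ h t) * psi (j - h)).natDegree : ℤ) <
          (τ : ℤ) * s + (∑ t, j t) * ((k : ℤ) - 1) + 1)) := by
  have hn : 1 ≤ n := Nat.one_le_iff_ne_zero.mpr (by omega)
  have hGne : G ≠ 0 := by
    rw [hG]
    exact Finset.prod_ne_zero_iff.mpr fun i _ => X_sub_C_ne_zero (α i)
  have hGdeg : G.natDegree = n := by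
    rw [hG, Polynomial.natDegree_prod _ _ fun i _ => X_sub_C_ne_zero (α i)]
    simp [natDegree_X_sub_C]
  have hRnat : ∀ t, (R t).natDegree ≤ n - 1 := by
    intro t
    by_cases hR0 : R t = 0
    · simp [hR0]
    · have := (Polynomial.natDegree_lt_iff_degree_lt hR0).mpr (hRdeg t)
      omega
  -- the Padé combination for the original R
  set S : (Fin m → ℕ) → Polynomial F := fun u =>
    ∑ i ∈ (Finset.Iic u).filter (fun i => ∑ t, i t < s),
      lam i * (((∏ t, (u t).choose (i t) : ℕ) : Polynomial F) *
        (∏ t, R t ^ (u t - i t)) * G ^ (∑ t, i t)) with hSdef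
  have hS_congr : ∀ u : Fin m → ℕ, 1 ≤ ∑ t, u t → ∑ t, u t ≤ ℓ →
      (if (∑ t, u t) < s then (X : Polynomial F) ^ (τ * s + (∑ t, u t) * (n - 1) + 1)
        else G ^ s) ∣ (S u - psi u) := by
    intro u h1 h2
    simpa only [hSdef] using hcong u h1 h2
  -- degree bound on each term of S u
  have hterm : ∀ (u i : Fin m → ℕ), i ≤ u → (∑ t, i t < s) →
      (lam i * (((∏ t, (u t).choose (i t) : ℕ) : Polynomial F) *
        (∏ t, R t ^ (u t - i t)) * G ^ (∑ t, i t))).natDegree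
        ≤ τ * s + (∑ t, u t) * (n - 1) := by
    intro u i hiu his
    by_cases hli : lam i = 0
    · simp [hli]
    have hlam2 : (lam i).natDegree + ∑ t, i t ≤ τ * s := by
      have h1 := hlamdeg i his hli
      have h2 : ((lam i).natDegree : ℤ) + ((∑ t, i t : ℕ) : ℤ) ≤ ((τ * s : ℕ) : ℤ) := by
        push_cast at h1 ⊢
        linarith
      exact_mod_cast h2
    have hRb : (∏ t, R t ^ (u t - i t)).natDegree ≤ (∑ t, (u t - i t)) * (n - 1) := by
      refine (Polynomial.natDegree_prod_le _ _).trans ?_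
      rw [Finset.sum_mul]
      exact Finset.sum_le_sum fun t _ =>
        (Polynomial.natDegree_pow_le).trans (Nat.mul_le_mul_left _ (hRnat t))
    have hGb : (G ^ (∑ t, i t)).natDegree ≤ (∑ t, i t) * n :=
      (Polynomial.natDegree_pow_le).trans (by rw [hGdeg])
    have h3 : (lam i * (((∏ t, (u t).choose (i t) : ℕ) : Polynomial F) *
        (∏ t, R t ^ (u t - i t)) * G ^ (∑ t, i t))).natDegree
        ≤ (lam i).natDegree + (0 + (∑ t, (u t - i t)) * (n - 1) + (∑ t, i t) * n) := by
      refine (Polynomial.natDegree_mul_le).trans (Nat.add_le_add_left ?_ _)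
      refine (Polynomial.natDegree_mul_le).trans (Nat.add_le_add ?_ hGb)
      refine (Polynomial.natDegree_mul_le).trans (Nat.add_le_add ?_ hRb)
      exact (Polynomial.natDegree_natCast _).le.trans (Nat.zero_le _)
    have hsum : (∑ t, (u t - i t)) + ∑ t, i t = ∑ t, u t := by
      have h' : ∀ t, i t ≤ u t := hiu
      rw [← Finset.sum_add_distrib]
      exact Finset.sum_congr rfl fun t _ => Nat.sub_add_cancel (h' t)
    have h4 : (∑ t, (u t - i t)) * (n - 1) + (∑ t, i t) * (n - 1)
        = (∑ t, u t) * (n - 1) := by rw [← add_mul, hsum]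
    have h5 : (∑ t, i t) * n = (∑ t, i t) * (n - 1) + (∑ t, i t) := by
      conv_lhs => rw [show n = (n - 1) + 1 by omega]
      rw [Nat.mul_succ]
    refine h3.trans ?_
    have : (lam i).natDegree + (0 + (∑ t, (u t - i t)) * (n - 1) + (∑ t, i t) * n)
        = ((lam i).natDegree + ∑ t, i t) + (∑ t, u t) * (n - 1) := by
      rw [h5, ← h4]; ring
    rw [this]
    exact Nat.add_le_add_right hlam2 _
  have hSdeg : ∀ u : Fin m → ℕ, (S u).natDegree ≤ τ * s + (∑ t, u t) * (n - 1) := by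
    intro u
    rw [hSdef]
    refine Polynomial.natDegree_sum_le_of_forall_le _ _ fun i hi => ?_
    rw [Finset.mem_filter, Finset.mem_Iic] at hi
    exact hterm u i hi.1 hi.2
  -- degree bound on psi (ℕ version, against the looser bound n-1)
  have hpsiN : ∀ u : Fin m → ℕ, ∑ t, u t ≤ ℓ →
      (psi u).natDegree ≤ τ * s + (∑ t, u t) * (n - 1) := by
    intro u hul
    by_cases hp0 : psi u = 0
    · simp [hp0]
    rcases Nat.eq_zero_or_pos (∑ t, u t) with h0 | h1
    · have hu0 : u = 0 := funext fun t => by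
        have := (Finset.sum_eq_zero_iff).mp h0 t (Finset.mem_univ t)
        simpa using this
      subst hu0
      have hl0 : lam 0 ≠ 0 := by rw [← hpsi0]; exact hp0
      have := hlamdeg 0 (by simpa using hs) hl0
      have h2 : ((psi 0).natDegree : ℤ) ≤ ((τ * s : ℕ) : ℤ) := by
        rw [hpsi0]
        push_cast
        simp only [Pi.zero_apply, Finset.sum_const_zero] at this ⊢
        push_cast at this
        linarith
      have h3 : (psi 0).natDegree ≤ τ * s := by exact_mod_cast h2
      omega
    · have hd := hpsideg u h1 hul hp0
      have hkn : ((k : ℤ) - 1) ≤ ((n - 1 : ℕ) : ℤ) := by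
        rw [Nat.cast_sub hn]; push_cast; omega
      have hmul : ((∑ t, u t : ℕ) : ℤ) * ((k : ℤ) - 1)
          ≤ ((∑ t, u t : ℕ) : ℤ) * ((n - 1 : ℕ) : ℤ) :=
        mul_le_mul_of_nonneg_left hkn (by positivity)
      have h2 : ((psi u).natDegree : ℤ) ≤ ((τ * s + (∑ t, u t) * (n - 1) : ℕ) : ℤ) := by
        push_cast [-Nat.cast_sub, -Nat.cast_sum]
        linarith
      exact_mod_cast h2
  -- exactness: for |u| < s the congruence is an equality
  have hexact : ∀ u : Fin m → ℕ, ∑ t, u t < s → ∑ t, u t ≤ ℓ → S u = psi u := by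
    intro u hus hul
    rcases Nat.eq_zero_or_pos (∑ t, u t) with h0 | h1
    · have hu0 : u = 0 := funext fun t => by
        have := (Finset.sum_eq_zero_iff).mp h0 t (Finset.mem_univ t)
        simpa using this
      subst hu0
      simp only [hSdef, hpsi0]
      have hIic : Finset.Iic (0 : Fin m → ℕ) = {0} := by
        ext x
        simp only [Finset.mem_Iic, Finset.mem_singleton]
        constructor
        · intro hx; funext t; exact Nat.le_zero.mp (hx t)
        · rintro rfl; exact le_rfl
      rw [hIic]
      rw [Finset.filter_singleton]
      rw [if_pos (by simpa using hs)]
      simp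
    · have hdvd := hS_congr u h1 hul
      rw [if_pos hus] at hdvd
      by_contra hne
      have hEne : S u - psi u ≠ 0 := sub_ne_zero.mpr hne
      have hdeg : (S u - psi u).natDegree ≤ τ * s + (∑ t, u t) * (n - 1) :=
        (Polynomial.natDegree_sub_le _ _).trans (max_le (hSdeg u) (hpsiN u hul))
      have hge := Polynomial.natDegree_le_of_dvd hdvd hEne
      rw [Polynomial.natDegree_X_pow] at hge
      omega
  -- now the main statement
  intro j hj1 hjl
  have hψhat_eq : ∀ h : Fin m → ℕ, h ∈ Finset.Iic j →
      (∑ t, (j - h) t) ≤ ℓ := by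
    intro h hh
    refine le_trans (Finset.sum_le_sum fun t _ => ?_) hjl
    simp only [Pi.sub_apply]
    omega
  -- key algebraic identity
  have key : (∑ i ∈ (Finset.Iic j).filter (fun i => ∑ t, i t < s),
        lam i * (((∏ t, (j t).choose (i t) : ℕ) : Polynomial F) *
          (∏ t, (R t + fhat t) ^ (j t - i t)) * G ^ (∑ t, i t)) -
        ∑ h ∈ Finset.Iic j,
          ((∏ t, (j t).choose (h t) : ℕ) : Polynomial F) *
            (∏ t, fhat t ^ h t) * psi (j - h))
      = ∑ h ∈ Finset.Iic j,
          ((∏ t, (j t).choose (h t) : ℕ) : Polynomial F) *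
            (∏ t, fhat t ^ h t) * (S (j - h) - psi (j - h)) := by
    have hA : (∑ i ∈ (Finset.Iic j).filter (fun i => ∑ t, i t < s),
          lam i * (((∏ t, (j t).choose (i t) : ℕ) : Polynomial F) *
            (∏ t, (R t + fhat t) ^ (j t - i t)) * G ^ (∑ t, i t)))
        = ∑ h ∈ Finset.Iic j,
            ((∏ t, (j t).choose (h t) : ℕ) : Polynomial F) *
              (∏ t, fhat t ^ h t) * S (j - h) := by
      calc (∑ i ∈ (Finset.Iic j).filter (fun i => ∑ t, i t < s),
            lam i * (((∏ t, (j t).choose (i t) : ℕ) : Polynomial F) *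
              (∏ t, (R t + fhat t) ^ (j t - i t)) * G ^ (∑ t, i t)))
          = ∑ i ∈ Finset.Iic j, (if ∑ t, i t < s then
              lam i * (((∏ t, (j t).choose (i t) : ℕ) : Polynomial F) *
                (∏ t, (R t + fhat t) ^ (j t - i t)) * G ^ (∑ t, i t)) else 0) :=
            Finset.sum_filter _ _
        _ = ∑ i ∈ Finset.Iic j, ∑ h ∈ Finset.Iic (j - i),
              (if ∑ t, i t < s then
                lam i * (((∏ t, (j t).choose (i t) : ℕ) : Polynomial F) *
                  ((((∏ t, ((j - i) t).choose (h t) : ℕ)) : Polynomial F) *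
                    (∏ t, fhat t ^ h t) * (∏ t, R t ^ ((j - i) t - h t))) *
                  G ^ (∑ t, i t)) else 0) := by
            refine Finset.sum_congr rfl fun i hi => ?_
            by_cases his : ∑ t, i t < s
            · rw [if_pos his]
              have hbin := PadeAux.multibinom R fhat (j - i)
              simp only [Pi.sub_apply] at hbin
              rw [hbin]
              rw [Finset.mul_sum, Finset.sum_mul, Finset.mul_sum]
              refine Finset.sum_congr rfl fun h _ => ?_
              rw [if_pos his]
              simp only [Pi.sub_apply]
            · rw [if_neg his]
              simp only [if_neg his]
              rw [Finset.sum_const_zero]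
        _ = ∑ h ∈ Finset.Iic j, ∑ i ∈ Finset.Iic (j - h),
              (if ∑ t, i t < s then
                lam i * (((∏ t, (j t).choose (i t) : ℕ) : Polynomial F) *
                  ((((∏ t, ((j - i) t).choose (h t) : ℕ)) : Polynomial F) *
                    (∏ t, fhat t ^ h t) * (∏ t, R t ^ ((j - i) t - h t))) *
                  G ^ (∑ t, i t)) else 0) :=
            PadeAux.sum_sub_swap j _
        _ = ∑ h ∈ Finset.Iic j,
              ((∏ t, (j t).choose (h t) : ℕ) : Polynomial F) *
                (∏ t, fhat t ^ h t) * S (j - h) := by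
            refine Finset.sum_congr rfl fun h hh => ?_
            have hhj : ∀ t, h t ≤ j t := Finset.mem_Iic.mp hh
            rw [hSdef]
            simp only []
            rw [Finset.sum_filter, Finset.mul_sum]
            refine Finset.sum_congr rfl fun i hi => ?_
            have hijh : ∀ t, i t ≤ j t - h t := by
              intro t
              have := Finset.mem_Iic.mp hi t
              simpa [Pi.sub_apply] using this
            by_cases his : ∑ t, i t < s
            · rw [if_pos his, if_pos his]
              have hsum_le : ∀ t, i t + h t ≤ j t := fun t => by
                have := hijh t; have := hhj t; omega
              have hcc : ((∏ t, (j t).choose (i t) : ℕ) : Polynomial F) *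
                  ((∏ t, ((j - i) t).choose (h t) : ℕ) : Polynomial F)
                  = ((∏ t, (j t).choose (h t) : ℕ) : Polynomial F) *
                    ((∏ t, ((j - h) t).choose (i t) : ℕ) : Polynomial F) := by
                rw [← Nat.cast_mul, ← Nat.cast_mul]
                simp only [Pi.sub_apply]
                exact congrArg (Nat.cast : ℕ → Polynomial F)
                  (PadeAux.choose_prod_identity i h j hsum_le)
              have hRR : (∏ t, R t ^ ((j - i) t - h t))
                  = ∏ t, R t ^ ((j - h) t - i t) := by
                refine Finset.prod_congr rfl fun t _ => ?_
                simp only [Pi.sub_apply]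
                congr 1
                omega
              rw [hRR]
              linear_combination
                (lam i * (∏ t, fhat t ^ h t) * (∏ t, R t ^ ((j - h) t - i t)) *
                  G ^ (∑ t, i t)) * hcc
            · rw [if_neg his, if_neg his, mul_zero]
    rw [hA, ← Finset.sum_sub_distrib]
    exact Finset.sum_congr rfl fun h _ => (mul_sub _ _ _).symm
  constructor
  · rw [key]
    refine Finset.dvd_sum fun h hh => ?_
    have hul : ∑ t, (j - h) t ≤ ℓ := hψhat_eq h hh
    by_cases hjs : ∑ t, j t < s
    · have hus : ∑ t, (j - h) t < s := by
        refine lt_of_le_of_lt ?_ hjs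
        refine Finset.sum_le_sum fun t _ => ?_
        simp only [Pi.sub_apply]; omega
      rw [sub_eq_zero.mpr (hexact _ hus hul), mul_zero]
      exact dvd_zero _
    · rw [if_neg hjs]
      by_cases hus : ∑ t, (j - h) t < s
      · rw [sub_eq_zero.mpr (hexact _ hus hul), mul_zero]
        exact dvd_zero _
      · have h1 : 1 ≤ ∑ t, (j - h) t := le_trans hs (not_lt.mp hus)
        have hdvd := hS_congr (j - h) h1 hul
        rw [if_neg hus] at hdvd
        exact hdvd.mul_left _
  · intro hne
    set T : (Fin m → ℕ) → Polynomial F := fun h =>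
      ((∏ t, (j t).choose (h t) : ℕ) : Polynomial F) *
        (∏ t, fhat t ^ h t) * psi (j - h) with hTdef
    have perterm : ∀ h ∈ Finset.Iic j, T h ≠ 0 →
        ((T h).natDegree : ℤ) ≤ (τ : ℤ) * s + (∑ t, j t) * ((k : ℤ) - 1) := by
      intro h hh hT
      have hhj : ∀ t, h t ≤ j t := Finset.mem_Iic.mp hh
      have hF : (∏ t, fhat t ^ h t) ≠ 0 := by
        intro h0
        apply hT
        rw [hTdef]; simp [h0]
      have hP : psi (j - h) ≠ 0 := by
        intro h0
        apply hT
        rw [hTdef]; simp [h0]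
      -- degree of the fhat product
      have hFdeg : ((∏ t, fhat t ^ h t).natDegree : ℤ)
          ≤ ((∑ t, h t : ℕ) : ℤ) * ((k : ℤ) - 1) := by
        have h1 : (∏ t, fhat t ^ h t).natDegree ≤ ∑ t, (fhat t ^ h t).natDegree :=
          Polynomial.natDegree_prod_le _ _
        have h2 : ((∑ t, (fhat t ^ h t).natDegree : ℕ) : ℤ)
            ≤ ∑ t, (h t : ℤ) * ((k : ℤ) - 1) := by
          push_cast
          refine Finset.sum_le_sum fun t _ => ?_
          rcases Nat.eq_zero_or_pos (h t) with h0 | hpos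
          · simp [h0]
          · have hft : fhat t ≠ 0 := by
              have hne := Finset.prod_ne_zero_iff.mp hF t (Finset.mem_univ t)
              intro h0
              rw [h0] at hne
              exact hne (zero_pow (by omega))
            have hnd : ((fhat t).natDegree : ℤ) ≤ (k : ℤ) - 1 := by
              have hklt := (Polynomial.natDegree_lt_iff_degree_lt hft).mpr (hfhat t)
              have hklt' : (fhat t).natDegree < k := by exact_mod_cast hklt
              omega
            calc ((fhat t ^ h t).natDegree : ℤ)
                ≤ ((h t * (fhat t).natDegree : ℕ) : ℤ) := by
                  exact_mod_cast Polynomial.natDegree_pow_le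
              _ = (h t : ℤ) * ((fhat t).natDegree : ℤ) := by push_cast; ring
              _ ≤ (h t : ℤ) * ((k : ℤ) - 1) :=
                  mul_le_mul_of_nonneg_left hnd (by positivity)
        calc ((∏ t, fhat t ^ h t).natDegree : ℤ)
            ≤ ((∑ t, (fhat t ^ h t).natDegree : ℕ) : ℤ) := by exact_mod_cast h1
          _ ≤ ∑ t, (h t : ℤ) * ((k : ℤ) - 1) := h2
          _ = ((∑ t, h t : ℕ) : ℤ) * ((k : ℤ) - 1) := by
              rw [← Finset.sum_mul]; push_cast; ring
      -- degree of psi (j - h)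
      have hPdeg : ((psi (j - h)).natDegree : ℤ)
          ≤ (τ : ℤ) * s + ((∑ t, (j - h) t : ℕ) : ℤ) * ((k : ℤ) - 1) := by
        rcases Nat.eq_zero_or_pos (∑ t, (j - h) t) with h0 | h1
        · have hu0 : j - h = 0 := funext fun t => by
            have := (Finset.sum_eq_zero_iff).mp h0 t (Finset.mem_univ t)
            simpa using this
          rw [hu0, hpsi0]
          have hl0 : lam 0 ≠ 0 := by rw [← hpsi0, ← hu0]; exact hP
          have := hlamdeg 0 (by simpa using hs) hl0
          simp only [Pi.zero_apply, Finset.sum_const_zero, Nat.cast_zero, sub_zero,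
            zero_mul, add_zero, h0] at this ⊢
          linarith
        · have := hpsideg (j - h) h1 (hψhat_eq h hh) hP
          linarith
      have hsum : (∑ t, h t) + (∑ t, (j - h) t) = ∑ t, j t := by
        rw [← Finset.sum_add_distrib]
        refine Finset.sum_congr rfl fun t _ => ?_
        simp only [Pi.sub_apply]
        have := hhj t; omega
      have hTle : (T h).natDegree ≤ (∏ t, fhat t ^ h t).natDegree +
          (psi (j - h)).natDegree := by
        rw [hTdef]
        refine (Polynomial.natDegree_mul_le).trans ?_
        refine Nat.add_le_add_right ?_ _
        refine (Polynomial.natDegree_mul_le).trans ?_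
        rw [Polynomial.natDegree_natCast]
        simp
      have hmulsum : ((∑ t, h t : ℕ) : ℤ) * ((k : ℤ) - 1) +
          ((∑ t, (j - h) t : ℕ) : ℤ) * ((k : ℤ) - 1)
          = ((∑ t, j t : ℕ) : ℤ) * ((k : ℤ) - 1) := by
        rw [← add_mul, ← Nat.cast_add, hsum]
      have : ((T h).natDegree : ℤ) ≤ ((∏ t, fhat t ^ h t).natDegree : ℤ) +
          ((psi (j - h)).natDegree : ℤ) := by exact_mod_cast hTle
      linarith
    obtain ⟨h0, hh0, hT0⟩ := Finset.exists_ne_zero_of_sum_ne_zero hne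
    have hσ0 : (0 : ℤ) ≤ (τ : ℤ) * s + (∑ t, j t) * ((k : ℤ) - 1) :=
      le_trans (Int.ofNat_nonneg _) (perterm h0 hh0 hT0)
    set B : ℕ := ((τ : ℤ) * s + (∑ t, j t) * ((k : ℤ) - 1)).toNat with hB
    have hBeq : (B : ℤ) = (τ : ℤ) * s + (∑ t, j t) * ((k : ℤ) - 1) :=
      Int.toNat_of_nonneg hσ0
    have hfin : (∑ h ∈ Finset.Iic j, T h).natDegree ≤ B := by
      refine Polynomial.natDegree_sum_le_of_forall_le _ _ fun h hh => ?_
      by_cases hT : T h = 0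
      · simp [hT]
      · have := perterm h hh hT
        have h2 : ((T h).natDegree : ℤ) ≤ (B : ℤ) := by rw [hBeq]; exact this
        exact_mod_cast h2
    have h3 : ((∑ h ∈ Finset.Iic j, T h).natDegree : ℤ) ≤ (B : ℤ) := by
      exact_mod_cast hfin
    rw [hBeq] at h3
    have hfinal : ((∑ h ∈ Finset.Iic j, T h).natDegree : ℤ)
        < (τ : ℤ) * s + (∑ t, j t) * ((k : ℤ) - 1) + 1 := by linarith
    simpa only [hTdef] using hfinal
end
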